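/- arXiv:2007.06361 — 4 statements merged into one kernel-verified Lean document; each statement's English description precedes it below -/
import Mathlib

section
/- Let L > 0, let K be a positive integer, and let 0 = t₀ < t₁ < ⋯ < t_K = L be a partition of [0, L]. Let f : ℝ → ℝ be L-periodic, bounded, of bounded variation on [0, L], monotone (nondecreasing or nonincreasing) on each interval [t_{i−1}, t_i], continuous at 0, and continuous at every point at which f attains a local maximum and which is not contained in an open interval on which f is constant. Then there exists a sequence (g_n)_{n≥1} of continuous L-periodic functions ℝ → ℝ such that: (1) g_n(x) ≤ g_{n+1}(x) ≤ f(x) for all x ∈ ℝ and all n; (2) g_n(x) → f(x) as n → ∞ at every point x at which f is continuous; (3) for every point x₀ at which f is continuous and attains a local minimum, g_n(x₀) = f(x₀) for all sufficiently large n; (4) for every open interval (s, t) on which f is monotone nondecreasing (respectively nonincreasing) and for every n with s + 3/n ≤ t − 3/n, the function g_n is monotone nondecreasing (respectively nonincreasing) on [s + 3/n, t − 3/n]; (5) limsup_{n→∞} Var(g_n; [0, L]) ≤ Var(f; [0, L]). -/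
open Filter Set


open scoped ENNReal NNReal Topology

namespace Aprox1Aux

/-- sliding-window infimum of `f` at grid node `j`, window radius `δ`. -/
noncomputable def H (f : ℝ → ℝ) (δ : ℝ) (j : ℤ) : ℝ :=
  sInf (f '' Icc (((j : ℝ) - 1) * δ) (((j : ℝ) + 1) * δ))

/-- piecewise linear interpolation of the node values `H`. -/
noncomputable def G (f : ℝ → ℝ) (δ : ℝ) (x : ℝ) : ℝ :=
  H f δ ⌊x / δ⌋ + (H f δ (⌊x / δ⌋ + 1) - H f δ ⌊x / δ⌋) * (x / δ - (⌊x / δ⌋ : ℤ))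

section basic

variable {f : ℝ → ℝ} {C δ : ℝ}

lemma win_nonempty (hδ : 0 < δ) (j : ℤ) :
    (f '' Icc (((j : ℝ) - 1) * δ) (((j : ℝ) + 1) * δ)).Nonempty := by
  refine ⟨f ((j : ℝ) * δ), ⟨(j : ℝ) * δ, ⟨by nlinarith, by nlinarith⟩, rfl⟩⟩

lemma win_bddBelow (hC : ∀ x, |f x| ≤ C) (j : ℤ) :
    BddBelow (f '' Icc (((j : ℝ) - 1) * δ) (((j : ℝ) + 1) * δ)) := by
  refine ⟨-C, ?_⟩
  rintro z ⟨y, _, rfl⟩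
  exact neg_le_of_abs_le (hC y)

lemma H_le (hC : ∀ x, |f x| ≤ C) {j : ℤ} {y : ℝ}
    (h1 : ((j : ℝ) - 1) * δ ≤ y) (h2 : y ≤ ((j : ℝ) + 1) * δ) :
    H f δ j ≤ f y :=
  csInf_le (win_bddBelow hC j) ⟨y, ⟨h1, h2⟩, rfl⟩

lemma le_H (hδ : 0 < δ) {j : ℤ} {c : ℝ}
    (h : ∀ y, ((j : ℝ) - 1) * δ ≤ y → y ≤ ((j : ℝ) + 1) * δ → c ≤ f y) :
    c ≤ H f δ j := by
  refine le_csInf (win_nonempty hδ j) ?_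
  rintro z ⟨y, ⟨h1, h2⟩, rfl⟩
  exact h y h1 h2

lemma H_abs_le (hδ : 0 < δ) (hC : ∀ x, |f x| ≤ C) (j : ℤ) : |H f δ j| ≤ C := by
  rw [abs_le]
  constructor
  · exact le_H hδ fun y _ _ => neg_le_of_abs_le (hC y)
  · exact le_trans (H_le hC (by nlinarith) (by nlinarith : (j:ℝ)*δ ≤ ((j:ℝ)+1)*δ))
      (le_of_abs_le (hC _))

lemma cell_left (hδ : 0 < δ) (x : ℝ) : ((⌊x / δ⌋ : ℤ) : ℝ) * δ ≤ x := by
  have h := Int.floor_le (x / δ)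
  calc ((⌊x / δ⌋ : ℤ) : ℝ) * δ ≤ (x / δ) * δ := by nlinarith
    _ = x := by field_simp

lemma cell_right (hδ : 0 < δ) (x : ℝ) : x < (((⌊x / δ⌋ : ℤ) : ℝ) + 1) * δ := by
  have h := Int.lt_floor_add_one (x / δ)
  have : x / δ * δ < (((⌊x / δ⌋ : ℤ) : ℝ) + 1) * δ := by nlinarith
  calc x = x / δ * δ := by field_simp
    _ < _ := this

lemma floor_eq (hδ : 0 < δ) {j : ℤ} {x : ℝ}
    (h1 : (j : ℝ) * δ ≤ x) (h2 : x < ((j : ℝ) + 1) * δ) : ⌊x / δ⌋ = j := by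
  rw [Int.floor_eq_iff]
  constructor
  · rw [le_div_iff₀ hδ]; linarith
  · rw [div_lt_iff₀ hδ]; push_cast; linarith

lemma G_cell (hδ : 0 < δ) {j : ℤ} {x : ℝ}
    (h1 : (j : ℝ) * δ ≤ x) (h2 : x ≤ ((j : ℝ) + 1) * δ) :
    G f δ x = H f δ j + (H f δ (j + 1) - H f δ j) * ((x - (j : ℝ) * δ) / δ) := by
  rcases lt_or_eq_of_le h2 with h2' | h2'
  · have hf : ⌊x / δ⌋ = j := floor_eq hδ h1 h2'
    rw [G, hf]
    have hx : x / δ - (j : ℝ) = (x - (j : ℝ) * δ) / δ := by field_simp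
    rw [hx]
  · have hx : x = ((j + 1 : ℤ) : ℝ) * δ := by push_cast; linarith
    have hfl : ⌊x / δ⌋ = j + 1 := by
      rw [hx, mul_div_assoc, div_self hδ.ne', mul_one, Int.floor_intCast]
    rw [G, hfl]
    have hr : (x - (j : ℝ) * δ) / δ = 1 := by
      rw [h2']; field_simp; ring
    have hr2 : x / δ - ((j + 1 : ℤ) : ℝ) = 0 := by
      rw [hx]; field_simp; ring
    rw [hr, hr2]
    push_cast
    ring

lemma G_node (hδ : 0 < δ) (j : ℤ) : G f δ ((j : ℝ) * δ) = H f δ j := by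
  rw [G_cell hδ le_rfl (by nlinarith)]
  rw [sub_self, zero_div, mul_zero, add_zero]

lemma G_diff (hδ : 0 < δ) {j : ℤ} {x y : ℝ}
    (hx1 : (j : ℝ) * δ ≤ x) (hx2 : x ≤ ((j : ℝ) + 1) * δ)
    (hy1 : (j : ℝ) * δ ≤ y) (hy2 : y ≤ ((j : ℝ) + 1) * δ) :
    G f δ y - G f δ x = (H f δ (j + 1) - H f δ j) * (y - x) / δ := by
  rw [G_cell hδ hx1 hx2, G_cell hδ hy1 hy2]
  field_simp
  ring

lemma G_le_f (hδ : 0 < δ) (hC : ∀ x, |f x| ≤ C) (x : ℝ) : G f δ x ≤ f x := by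
  set j := ⌊x / δ⌋ with hj
  have h1 : ((j : ℤ) : ℝ) * δ ≤ x := cell_left hδ x
  have h2 : x ≤ (((j : ℤ) : ℝ) + 1) * δ := (cell_right hδ x).le
  have hHj : H f δ j ≤ f x := H_le hC (by nlinarith) h2
  have hHj1 : H f δ (j + 1) ≤ f x := by
    refine H_le hC ?_ ?_ <;> push_cast <;> nlinarith
  rw [G_cell hδ h1 h2]
  have ht0 : 0 ≤ (x - (j : ℝ) * δ) / δ := div_nonneg (by linarith) hδ.le
  have ht1 : (x - (j : ℝ) * δ) / δ ≤ 1 := by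
    rw [div_le_one hδ]; linarith
  nlinarith

lemma G_ge (hδ : 0 < δ) {x c : ℝ}
    (hc1 : c ≤ H f δ ⌊x / δ⌋) (hc2 : c ≤ H f δ (⌊x / δ⌋ + 1)) :
    c ≤ G f δ x := by
  set j := ⌊x / δ⌋ with hj
  have h1 : ((j : ℤ) : ℝ) * δ ≤ x := cell_left hδ x
  have h2 : x ≤ (((j : ℤ) : ℝ) + 1) * δ := (cell_right hδ x).le
  rw [G_cell hδ h1 h2]
  have ht0 : 0 ≤ (x - (j : ℝ) * δ) / δ := div_nonneg (by linarith) hδ.le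
  have ht1 : (x - (j : ℝ) * δ) / δ ≤ 1 := by
    rw [div_le_one hδ]; linarith
  nlinarith

lemma G_mono_aux (hδ : 0 < δ) {A B : ℝ}
    (hstep : ∀ j : ℤ, A ≤ ((j : ℝ) + 1) * δ → (j : ℝ) * δ ≤ B → H f δ j ≤ H f δ (j + 1))
    (y : ℝ) (hyB : y ≤ B) :
    ∀ k : ℕ, ∀ x : ℝ, A ≤ x → x ≤ y → (⌊y / δ⌋ - ⌊x / δ⌋).toNat = k →
      G f δ x ≤ G f δ y := by
  intro k
  induction k with
  | zero =>
    intro x hAx hxy hk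
    have hle : ⌊x / δ⌋ ≤ ⌊y / δ⌋ :=
      Int.floor_le_floor (by gcongr)
    have heq : ⌊y / δ⌋ = ⌊x / δ⌋ := by omega
    set j := ⌊x / δ⌋ with hj
    have hx1 : (j : ℝ) * δ ≤ x := cell_left hδ x
    have hy2 : y ≤ ((j : ℝ) + 1) * δ := by
      have := cell_right hδ y; rw [heq] at this; exact this.le
    have hdiff := G_diff (f := f) hδ hx1 (le_trans hxy hy2) (le_trans hx1 hxy) hy2
    have hH := hstep j (le_trans hAx (le_trans hxy hy2)) (le_trans hx1 (le_trans hxy hyB))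
    have hpos : 0 ≤ (H f δ (j + 1) - H f δ j) * (y - x) / δ :=
      div_nonneg (mul_nonneg (by linarith) (by linarith)) hδ.le
    linarith
  | succ k ih =>
    intro x hAx hxy hk
    set jx := ⌊x / δ⌋ with hjx
    have hle : jx ≤ ⌊y / δ⌋ := Int.floor_le_floor (by gcongr)
    have hlt : jx < ⌊y / δ⌋ := by omega
    set m := ((jx : ℝ) + 1) * δ with hm
    have hxm : x ≤ m := (cell_right hδ x).le
    have hmy : m ≤ y := by
      have h1 : ((jx : ℝ) + 1) ≤ ((⌊y / δ⌋ : ℤ) : ℝ) := by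
        have : (jx + 1 : ℤ) ≤ ⌊y / δ⌋ := hlt
        exact_mod_cast this
      have h2 := cell_left hδ y
      nlinarith
    have hstep1 : G f δ x ≤ G f δ m := by
      have hx1 : (jx : ℝ) * δ ≤ x := cell_left hδ x
      have hx2 : x ≤ ((jx : ℝ) + 1) * δ := hxm
      have hm1 : (jx : ℝ) * δ ≤ m := by nlinarith
      have hm2 : m ≤ ((jx : ℝ) + 1) * δ := le_rfl
      have hdiff := G_diff (f := f) hδ hx1 hx2 hm1 hm2
      have hH := hstep jx (le_trans hAx hx2) (le_trans hx1 (le_trans hxy hyB))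
      have hpos : 0 ≤ (H f δ (jx + 1) - H f δ jx) * (m - x) / δ :=
        div_nonneg (mul_nonneg (by linarith) (by linarith)) hδ.le
      linarith
    have hfm : ⌊m / δ⌋ = jx + 1 := by
      rw [hm, mul_div_assoc, div_self hδ.ne', mul_one,
        show ((jx : ℝ) + 1) = ((jx + 1 : ℤ) : ℝ) by push_cast; ring, Int.floor_intCast]
    refine le_trans hstep1 (ih m (le_trans hAx hxm) hmy ?_)
    rw [hfm]; omega

lemma G_monoOn (hδ : 0 < δ) {A B : ℝ}
    (hstep : ∀ j : ℤ, A ≤ ((j : ℝ) + 1) * δ → (j : ℝ) * δ ≤ B → H f δ j ≤ H f δ (j + 1)) :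
    MonotoneOn (G f δ) (Icc A B) := by
  rintro x ⟨hAx, hxB⟩ y ⟨hAy, hyB⟩ hxy
  exact G_mono_aux hδ hstep y hyB _ x hAx hxy rfl

lemma G_anti_aux (hδ : 0 < δ) {A B : ℝ}
    (hstep : ∀ j : ℤ, A ≤ ((j : ℝ) + 1) * δ → (j : ℝ) * δ ≤ B → H f δ (j + 1) ≤ H f δ j)
    (y : ℝ) (hyB : y ≤ B) :
    ∀ k : ℕ, ∀ x : ℝ, A ≤ x → x ≤ y → (⌊y / δ⌋ - ⌊x / δ⌋).toNat = k →
      G f δ y ≤ G f δ x := by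
  intro k
  induction k with
  | zero =>
    intro x hAx hxy hk
    have hle : ⌊x / δ⌋ ≤ ⌊y / δ⌋ := Int.floor_le_floor (by gcongr)
    have heq : ⌊y / δ⌋ = ⌊x / δ⌋ := by omega
    set j := ⌊x / δ⌋ with hj
    have hx1 : (j : ℝ) * δ ≤ x := cell_left hδ x
    have hy2 : y ≤ ((j : ℝ) + 1) * δ := by
      have := cell_right hδ y; rw [heq] at this; exact this.le
    have hdiff := G_diff (f := f) hδ hx1 (le_trans hxy hy2) (le_trans hx1 hxy) hy2
    have hH := hstep j (le_trans hAx (le_trans hxy hy2)) (le_trans hx1 (le_trans hxy hyB))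
    have hpos : (H f δ (j + 1) - H f δ j) * (y - x) / δ ≤ 0 :=
      div_nonpos_of_nonpos_of_nonneg (mul_nonpos_of_nonpos_of_nonneg (by linarith) (by linarith)) hδ.le
    linarith
  | succ k ih =>
    intro x hAx hxy hk
    set jx := ⌊x / δ⌋ with hjx
    have hle : jx ≤ ⌊y / δ⌋ := Int.floor_le_floor (by gcongr)
    have hlt : jx < ⌊y / δ⌋ := by omega
    set m := ((jx : ℝ) + 1) * δ with hm
    have hxm : x ≤ m := (cell_right hδ x).le
    have hmy : m ≤ y := by
      have h1 : ((jx : ℝ) + 1) ≤ ((⌊y / δ⌋ : ℤ) : ℝ) := by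
        have : (jx + 1 : ℤ) ≤ ⌊y / δ⌋ := hlt
        exact_mod_cast this
      have h2 := cell_left hδ y
      nlinarith
    have hstep1 : G f δ m ≤ G f δ x := by
      have hx1 : (jx : ℝ) * δ ≤ x := cell_left hδ x
      have hx2 : x ≤ ((jx : ℝ) + 1) * δ := hxm
      have hm1 : (jx : ℝ) * δ ≤ m := by nlinarith
      have hm2 : m ≤ ((jx : ℝ) + 1) * δ := le_rfl
      have hdiff := G_diff (f := f) hδ hx1 hx2 hm1 hm2
      have hH := hstep jx (le_trans hAx hx2) (le_trans hx1 (le_trans hxy hyB))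
      have hpos : (H f δ (jx + 1) - H f δ jx) * (m - x) / δ ≤ 0 :=
        div_nonpos_of_nonpos_of_nonneg (mul_nonpos_of_nonpos_of_nonneg (by linarith) (by linarith)) hδ.le
      linarith
    have hfm : ⌊m / δ⌋ = jx + 1 := by
      rw [hm, mul_div_assoc, div_self hδ.ne', mul_one,
        show ((jx : ℝ) + 1) = ((jx + 1 : ℤ) : ℝ) by push_cast; ring, Int.floor_intCast]
    refine le_trans (ih m (le_trans hAx hxm) hmy ?_) hstep1
    rw [hfm]; omega

lemma G_antiOn (hδ : 0 < δ) {A B : ℝ}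
    (hstep : ∀ j : ℤ, A ≤ ((j : ℝ) + 1) * δ → (j : ℝ) * δ ≤ B → H f δ (j + 1) ≤ H f δ j) :
    AntitoneOn (G f δ) (Icc A B) := by
  rintro x ⟨hAx, hxB⟩ y ⟨hAy, hyB⟩ hxy
  exact G_anti_aux hδ hstep y hyB _ x hAx hxy rfl

lemma H_shift {T : ℝ} {N : ℤ} (hN : (N : ℝ) * δ = T) (hf : Function.Periodic f T) (j : ℤ) :
    H f δ (j + N) = H f δ j := by
  unfold H
  congr 1
  ext z
  simp only [mem_image, mem_Icc]
  constructor
  · rintro ⟨y, ⟨h1, h2⟩, rfl⟩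
    refine ⟨y - T, ⟨?_, ?_⟩, ?_⟩
    · have e : ((j : ℝ) - 1) * δ = (((j + N : ℤ) : ℝ) - 1) * δ - T := by
        push_cast; rw [← hN]; ring
      linarith
    · have e : ((j : ℝ) + 1) * δ = (((j + N : ℤ) : ℝ) + 1) * δ - T := by
        push_cast; rw [← hN]; ring
      linarith
    · have := hf (y - T); rw [sub_add_cancel] at this; exact this.symm
  · rintro ⟨y, ⟨h1, h2⟩, rfl⟩
    refine ⟨y + T, ⟨?_, ?_⟩, ?_⟩
    · have e : (((j + N : ℤ) : ℝ) - 1) * δ = ((j : ℝ) - 1) * δ + T := by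
        push_cast; rw [← hN]; ring
      linarith
    · have e : (((j + N : ℤ) : ℝ) + 1) * δ = ((j : ℝ) + 1) * δ + T := by
        push_cast; rw [← hN]; ring
      linarith
    · exact hf y

lemma G_periodic (hδ : 0 < δ) {T : ℝ} {N : ℤ} (hN : (N : ℝ) * δ = T)
    (hf : Function.Periodic f T) : Function.Periodic (G f δ) T := by
  intro x
  have hdiv : (x + T) / δ = x / δ + (N : ℝ) := by
    rw [← hN]; field_simp
  have hfl : ⌊(x + T) / δ⌋ = ⌊x / δ⌋ + N := by
    rw [hdiv, Int.floor_add_intCast]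
  unfold G
  rw [hfl, show ⌊x / δ⌋ + N + 1 = (⌊x / δ⌋ + 1) + N by ring, H_shift hN hf,
    H_shift hN hf, hdiv]
  push_cast
  ring

lemma G_lip_aux (hδ : 0 < δ) {M : ℝ}
    (hM : ∀ j : ℤ, |H f δ (j + 1) - H f δ j| ≤ M) :
    ∀ k : ℕ, ∀ x y : ℝ, x ≤ y → (⌊y / δ⌋ - ⌊x / δ⌋).toNat = k →
      |G f δ y - G f δ x| ≤ M * (y - x) / δ := by
  intro k
  induction k with
  | zero =>
    intro x y hxy hk
    have hle : ⌊x / δ⌋ ≤ ⌊y / δ⌋ := Int.floor_le_floor (by gcongr)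
    have heq : ⌊y / δ⌋ = ⌊x / δ⌋ := by omega
    set j := ⌊x / δ⌋ with hj
    have hx1 : (j : ℝ) * δ ≤ x := cell_left hδ x
    have hy2 : y ≤ ((j : ℝ) + 1) * δ := by
      have := cell_right hδ y; rw [heq] at this; exact this.le
    have hdiff := G_diff (f := f) hδ hx1 (le_trans hxy hy2) (le_trans hx1 hxy) hy2
    rw [hdiff, abs_div, abs_of_pos hδ, abs_mul, abs_of_nonneg (by linarith : (0:ℝ) ≤ y - x)]
    exact (div_le_div_iff_of_pos_right hδ).2 (mul_le_mul_of_nonneg_right (hM j) (by linarith))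
  | succ k ih =>
    intro x y hxy hk
    set jx := ⌊x / δ⌋ with hjx
    have hle : jx ≤ ⌊y / δ⌋ := Int.floor_le_floor (by gcongr)
    have hlt : jx < ⌊y / δ⌋ := by omega
    set m := ((jx : ℝ) + 1) * δ with hm
    have hxm : x ≤ m := (cell_right hδ x).le
    have hmy : m ≤ y := by
      have h1 : ((jx : ℝ) + 1) ≤ ((⌊y / δ⌋ : ℤ) : ℝ) := by
        have : (jx + 1 : ℤ) ≤ ⌊y / δ⌋ := hlt
        exact_mod_cast this
      have h2 := cell_left hδ y
      nlinarith
    have h1 : |G f δ m - G f δ x| ≤ M * (m - x) / δ := by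
      have hx1 : (jx : ℝ) * δ ≤ x := cell_left hδ x
      have hdiff := G_diff (f := f) hδ hx1 hxm (by nlinarith) le_rfl
      rw [hdiff, abs_div, abs_of_pos hδ, abs_mul, abs_of_nonneg (by linarith : (0:ℝ) ≤ m - x)]
      exact (div_le_div_iff_of_pos_right hδ).2 (mul_le_mul_of_nonneg_right (hM jx) (by linarith))
    have hfm : ⌊m / δ⌋ = jx + 1 := by
      rw [hm, mul_div_assoc, div_self hδ.ne', mul_one,
        show ((jx : ℝ) + 1) = ((jx + 1 : ℤ) : ℝ) by push_cast; ring, Int.floor_intCast]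
    have h2 : |G f δ y - G f δ m| ≤ M * (y - m) / δ := ih m y hmy (by rw [hfm]; omega)
    calc |G f δ y - G f δ x| ≤ |G f δ y - G f δ m| + |G f δ m - G f δ x| := abs_sub_le _ _ _
      _ ≤ M * (y - m) / δ + M * (m - x) / δ := add_le_add h2 h1
      _ = M * (y - x) / δ := by ring

lemma G_continuous (hδ : 0 < δ) (hC : ∀ x, |f x| ≤ C) : Continuous (G f δ) := by
  have hC0 : 0 ≤ C := le_trans (abs_nonneg _) (hC 0)
  have hM : ∀ j : ℤ, |H f δ (j + 1) - H f δ j| ≤ 2 * C := by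
    intro j
    have h1 := H_abs_le hδ hC (j + 1)
    have h2 := H_abs_le hδ hC j
    rw [abs_le] at h1 h2 ⊢
    constructor <;> linarith
  have key : ∀ x y : ℝ, x ≤ y → |G f δ y - G f δ x| ≤ (2 * C / δ) * (y - x) := by
    intro x y hxy
    have := G_lip_aux hδ hM _ x y hxy rfl
    calc |G f δ y - G f δ x| ≤ 2 * C * (y - x) / δ := this
      _ = (2 * C / δ) * (y - x) := by ring
  refine LipschitzWith.continuous (K := Real.toNNReal (2 * C / δ))
    (LipschitzWith.of_dist_le_mul ?_)
  intro x y
  rw [Real.dist_eq, Real.dist_eq, Real.coe_toNNReal _ (by positivity)]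
  rcases le_total x y with h | h
  · rw [abs_sub_comm, abs_sub_comm x y, abs_of_nonneg (by linarith : (0:ℝ) ≤ y - x)]
    exact key x y h
  · calc |G f δ x - G f δ y| ≤ (2 * C / δ) * (x - y) := key y x h
      _ = 2 * C / δ * |x - y| := by rw [abs_of_nonneg (by linarith : (0:ℝ) ≤ x - y)]

lemma G_refine (hδ : 0 < δ) (hC : ∀ x, |f x| ≤ C) (x : ℝ) :
    G f δ x ≤ G f (δ / 2) x := by
  have hδ' : 0 < δ / 2 := by linarith
  -- fine nodes dominate the coarse interpolation on their windows
  have key : ∀ k : ℤ, ∀ w : ℝ, ((k : ℝ) - 1) * (δ / 2) ≤ w → w ≤ ((k : ℝ) + 1) * (δ / 2) →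
      G f δ ((k : ℝ) * (δ / 2)) ≤ f w := by
    intro k w hw1 hw2
    obtain ⟨j, hj | hj⟩ := Int.even_or_odd' k
    · have hx : (k : ℝ) * (δ / 2) = (j : ℝ) * δ := by
        rw [hj]; push_cast; ring
      rw [hx, G_node hδ]
      refine H_le hC ?_ ?_
      · have : ((k : ℝ) - 1) * (δ / 2) = (j : ℝ) * δ - δ / 2 := by rw [hj]; push_cast; ring
        nlinarith
      · have : ((k : ℝ) + 1) * (δ / 2) = (j : ℝ) * δ + δ / 2 := by rw [hj]; push_cast; ring
        nlinarith
    · have hx : (k : ℝ) * (δ / 2) = (j : ℝ) * δ + δ / 2 := by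
        rw [hj]; push_cast; ring
      have hcell := G_cell (f := f) hδ (j := j) (x := (j : ℝ) * δ + δ / 2)
        (by linarith) (by nlinarith)
      have hw1' : (j : ℝ) * δ ≤ w := by
        have : ((k : ℝ) - 1) * (δ / 2) = (j : ℝ) * δ := by rw [hj]; push_cast; ring
        linarith
      have hw2' : w ≤ ((j : ℝ) + 1) * δ := by
        have : ((k : ℝ) + 1) * (δ / 2) = ((j : ℝ) + 1) * δ := by rw [hj]; push_cast; ring
        linarith
      have h1 : H f δ j ≤ f w := H_le hC (by nlinarith) (by nlinarith)
      have h2 : H f δ (j + 1) ≤ f w := by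
        refine H_le hC ?_ ?_ <;> push_cast <;> nlinarith
      have hrat : ((j : ℝ) * δ + δ / 2 - (j : ℝ) * δ) / δ = 1 / 2 := by
        field_simp; ring
      rw [hx, hcell, hrat]
      linarith
  have node_le : ∀ k : ℤ, G f δ ((k : ℝ) * (δ / 2)) ≤ H f (δ / 2) k := by
    intro k
    refine le_csInf (win_nonempty hδ' k) ?_
    rintro z ⟨w, ⟨hw1, hw2⟩, rfl⟩
    exact key k w hw1 hw2
  -- now compare on the fine cell containing x
  set k := ⌊x / (δ / 2)⌋ with hk
  have hk1 : (k : ℝ) * (δ / 2) ≤ x := cell_left hδ' x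
  have hk2 : x ≤ ((k : ℝ) + 1) * (δ / 2) := (cell_right hδ' x).le
  have main : ∀ j : ℤ, (j : ℝ) * δ ≤ (k : ℝ) * (δ / 2) → ((k : ℝ) + 1) * (δ / 2) ≤ ((j : ℝ) + 1) * δ →
      G f δ x ≤ G f (δ / 2) x := by
    intro j ha hb
    set a := G f δ ((k : ℝ) * (δ / 2)) with hadef
    set b := G f δ (((k : ℝ) + 1) * (δ / 2)) with hbdef
    set t := (x - (k : ℝ) * (δ / 2)) / (δ / 2) with htdef
    have ht0 : 0 ≤ t := div_nonneg (by linarith) hδ'.le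
    have ht1 : t ≤ 1 := by
      rw [htdef, div_le_one hδ']; linarith
    -- coarse interpolation is affine on the fine cell
    have hGx : G f δ x = a + (b - a) * t := by
      have d1 := G_diff (f := f) hδ (j := j) (x := (k : ℝ) * (δ / 2)) (y := x)
        ha (by linarith) (by linarith) (by linarith)
      have d2 := G_diff (f := f) hδ (j := j) (x := (k : ℝ) * (δ / 2))
        (y := ((k : ℝ) + 1) * (δ / 2)) ha (by linarith) (by linarith) hb
      have e2 : b - a = (H f δ (j + 1) - H f δ j) * (δ / 2) / δ := by
        rw [d2]; ring
      have e3 : (b - a) * t = (H f δ (j + 1) - H f δ j) * (x - (k : ℝ) * (δ / 2)) / δ := by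
        rw [e2, htdef]; field_simp
      linarith [d1]
    have hG'x : G f (δ / 2) x = H f (δ / 2) k + (H f (δ / 2) (k + 1) - H f (δ / 2) k) * t :=
      by
      have := G_cell (f := f) hδ' (j := k) hk1 hk2
      rw [this, htdef]
    have haa : a ≤ H f (δ / 2) k := node_le k
    have hbb : b ≤ H f (δ / 2) (k + 1) := by
      have := node_le (k + 1)
      have e : ((k + 1 : ℤ) : ℝ) = (k : ℝ) + 1 := by push_cast; ring
      rw [e] at this
      exact this
    rw [hGx, hG'x]
    nlinarith
  obtain ⟨j, hj | hj⟩ := Int.even_or_odd' k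
  · refine main j ?_ ?_
    · rw [hj]; push_cast; nlinarith
    · rw [hj]; push_cast; nlinarith
  · refine main j ?_ ?_
    · rw [hj]; push_cast; nlinarith
    · rw [hj]; push_cast; nlinarith

lemma evar_neg (g : ℝ → ℝ) (s : Set ℝ) :
    eVariationOn (fun x => -g x) s = eVariationOn g s := by
  apply le_antisymm
  · refine iSup_le ?_
    rintro ⟨n, u, hu, us⟩
    refine le_trans (le_of_eq ?_) (eVariationOn.sum_le (f := g) (n := n) hu us)
    refine Finset.sum_congr rfl fun i _ => ?_
    exact edist_neg_neg _ _
  · refine iSup_le ?_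
    rintro ⟨n, u, hu, us⟩
    refine le_trans (le_of_eq ?_) (eVariationOn.sum_le (f := fun x => -g x) (n := n) hu us)
    refine Finset.sum_congr rfl fun i _ => ?_
    exact (edist_neg_neg _ _).symm

lemma evar_mono_le {g : ℝ → ℝ} {a b : ℝ} (hab : a ≤ b) (hg : MonotoneOn g (Icc a b)) :
    eVariationOn g (Icc a b) ≤ ENNReal.ofReal (g b - g a) := by
  have h := hg.eVariationOn_le (a := a) (b := b) ⟨le_rfl, hab⟩ ⟨hab, le_rfl⟩
  rwa [inter_self] at h

lemma evar_anti_le {g : ℝ → ℝ} {a b : ℝ} (hab : a ≤ b) (hg : AntitoneOn g (Icc a b)) :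
    eVariationOn g (Icc a b) ≤ ENNReal.ofReal (g a - g b) := by
  rw [← evar_neg g]
  have hm : MonotoneOn (fun x => -g x) (Icc a b) := fun x hx y hy hxy =>
    neg_le_neg (hg hx hy hxy)
  have h2 := evar_mono_le hab hm
  have e : -g b - -g a = g a - g b := by ring
  rwa [e] at h2

lemma evar_split (g : ℝ → ℝ) {a b c : ℝ} (hab : a ≤ b) (hbc : b ≤ c) :
    eVariationOn g (Icc a c) = eVariationOn g (Icc a b) + eVariationOn g (Icc b c) := by
  have h := eVariationOn.Icc_add_Icc g (s := Icc a c) hab hbc ⟨hab, hbc⟩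
  have e1 : Icc a c ∩ Icc a b = Icc a b := by
    rw [Set.Icc_inter_Icc, max_self, min_eq_right hbc]
  have e2 : Icc a c ∩ Icc b c = Icc b c := by
    rw [Set.Icc_inter_Icc, max_eq_right hab, min_self]
  rw [e1, e2, inter_self] at h
  exact h.symm

lemma evar_grid (hδ : 0 < δ) (m : ℕ) :
    eVariationOn (G f δ) (Icc 0 ((m : ℝ) * δ)) ≤
      ∑ j ∈ Finset.range m, ENNReal.ofReal |H f δ ((j : ℤ) + 1) - H f δ (j : ℤ)| := by
  induction m with
  | zero =>
    simp only [Nat.cast_zero, zero_mul, Finset.range_zero, Finset.sum_empty]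
    refine le_of_eq (eVariationOn.subsingleton _ ?_)
    rw [Set.Icc_self]
    exact Set.subsingleton_singleton
  | succ m ih =>
    have h0m : (0 : ℝ) ≤ (m : ℝ) * δ := by positivity
    have hmm1 : (m : ℝ) * δ ≤ ((m : ℝ) + 1) * δ := by nlinarith
    have hcast : ((m + 1 : ℕ) : ℝ) * δ = ((m : ℝ) + 1) * δ := by push_cast; ring
    rw [hcast, evar_split _ h0m hmm1, Finset.sum_range_succ]
    refine add_le_add ih ?_
    -- variation over a single cell
    rcases le_total (H f δ (m : ℤ)) (H f δ ((m : ℤ) + 1)) with hH | hH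
    · have hmono : MonotoneOn (G f δ) (Icc ((m : ℝ) * δ) (((m : ℝ) + 1) * δ)) := by
        intro x hx y hy hxy
        have hd := G_diff (f := f) hδ (j := (m : ℤ)) (x := x) (y := y)
          (by push_cast; exact hx.1) (by push_cast; exact hx.2)
          (by push_cast; exact hy.1) (by push_cast; exact hy.2)
        have hpos : 0 ≤ (H f δ ((m : ℤ) + 1) - H f δ (m : ℤ)) * (y - x) / δ :=
          div_nonneg (mul_nonneg (by linarith) (by linarith)) hδ.le
        linarith
      refine le_trans (evar_mono_le hmm1 hmono) ?_
      have e1 : G f δ ((m : ℝ) * δ) = H f δ (m : ℤ) := by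
        have := G_node (f := f) hδ (m : ℤ); push_cast at this ⊢; exact this
      have e2 : G f δ (((m : ℝ) + 1) * δ) = H f δ ((m : ℤ) + 1) := by
        have := G_node (f := f) hδ ((m : ℤ) + 1); push_cast at this ⊢; exact this
      rw [e1, e2]
      exact ENNReal.ofReal_le_ofReal (le_abs_self _)
    · have hanti : AntitoneOn (G f δ) (Icc ((m : ℝ) * δ) (((m : ℝ) + 1) * δ)) := by
        intro x hx y hy hxy
        have hd := G_diff (f := f) hδ (j := (m : ℤ)) (x := x) (y := y)
          (by push_cast; exact hx.1) (by push_cast; exact hx.2)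
          (by push_cast; exact hy.1) (by push_cast; exact hy.2)
        have hpos : (H f δ ((m : ℤ) + 1) - H f δ (m : ℤ)) * (y - x) / δ ≤ 0 :=
          div_nonpos_of_nonpos_of_nonneg
            (mul_nonpos_of_nonpos_of_nonneg (by linarith) (by linarith)) hδ.le
        linarith
      refine le_trans (evar_anti_le hmm1 hanti) ?_
      have e1 : G f δ ((m : ℝ) * δ) = H f δ (m : ℤ) := by
        have := G_node (f := f) hδ (m : ℤ); push_cast at this ⊢; exact this
      have e2 : G f δ (((m : ℝ) + 1) * δ) = H f δ ((m : ℤ) + 1) := by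
        have := G_node (f := f) hδ ((m : ℤ) + 1); push_cast at this ⊢; exact this
      rw [e1, e2]
      exact ENNReal.ofReal_le_ofReal (by
        have := neg_abs_le (H f δ ((m : ℤ) + 1) - H f δ (m : ℤ))
        linarith [le_abs_self (H f δ ((m : ℤ) + 1) - H f δ (m : ℤ))])

lemma H_sum_le (hδ : 0 < δ) (hC : ∀ x, |f x| ≤ C) (m : ℕ) :
    ∑ j ∈ Finset.range m, ENNReal.ofReal |H f δ ((j : ℤ) + 1) - H f δ (j : ℤ)| ≤
      eVariationOn f (Icc (-δ) (((m : ℝ) + 1) * δ)) := by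
  apply ENNReal.le_of_forall_pos_le_add
  intro η hη _
  set ε' : ℝ := (η : ℝ) / ((m : ℝ) * ((m : ℝ) + 1) + 1) with hε'def
  have hεpos : 0 < ε' := by
    apply div_pos (by exact_mod_cast hη)
    positivity
  -- pick near-minimizers in each window
  have hex : ∀ i : ℕ, ∃ y : ℝ, (((i : ℤ) : ℝ) - 1) * δ ≤ y ∧ y ≤ (((i : ℤ) : ℝ) + 1) * δ ∧
      f y < H f δ (i : ℤ) + ε' := by
    intro i
    obtain ⟨z, hz, hlt⟩ := Real.lt_sInf_add_pos (win_nonempty hδ (i : ℤ)) hεpos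
    obtain ⟨y, ⟨hy1, hy2⟩, rfl⟩ := hz
    exact ⟨y, hy1, hy2, hlt⟩
  choose p hp1 hp2 hp3 using hex
  -- increasing rearrangement
  set z : ℕ → ℝ := fun i => Nat.rec (p 0) (fun i zi => max zi (p (i + 1))) i with hzdef
  have hz0 : z 0 = p 0 := rfl
  have hzs : ∀ i, z (i + 1) = max (z i) (p (i + 1)) := fun i => rfl
  have hzmono : Monotone z := monotone_nat_of_le_succ fun i => by
    rw [hzs]; exact le_max_left _ _
  have hzmem : ∀ i : ℕ, (((i : ℤ) : ℝ) - 1) * δ ≤ z i ∧ z i ≤ (((i : ℤ) : ℝ) + 1) * δ := by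
    intro i
    induction i with
    | zero => exact ⟨hp1 0, hp2 0⟩
    | succ i ih =>
      constructor
      · rw [hzs]
        refine le_trans ?_ (le_max_right _ _)
        exact hp1 (i + 1)
      · rw [hzs, max_le_iff]
        refine ⟨le_trans ih.2 ?_, hp2 (i + 1)⟩
        push_cast
        nlinarith
  have hinv : ∀ i : ℕ, f (z i) ≤ H f δ (i : ℤ) + ((i : ℝ) + 1) * ε' := by
    intro i
    induction i with
    | zero =>
      have h := hp3 0
      rw [hz0]
      push_cast at h ⊢
      linarith
    | succ i ih =>
      rcases le_total (p (i + 1)) (z i) with hcase | hcase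
      · -- stay
        have hzeq : z (i + 1) = z i := by rw [hzs, max_eq_left hcase]
        have hwin : H f δ (i : ℤ) ≤ f (p (i + 1)) := by
          refine H_le hC ?_ ?_
          · refine le_trans ?_ (hp1 (i + 1))
            push_cast; nlinarith
          · exact le_trans hcase (hzmem i).2
        have := hp3 (i + 1)
        rw [hzeq]
        push_cast at this ⊢
        nlinarith
      · -- advance
        have hzeq : z (i + 1) = p (i + 1) := by rw [hzs, max_eq_right hcase]
        have := hp3 (i + 1)
        rw [hzeq]
        push_cast at this ⊢
        nlinarith
  have hZwin : ∀ i : ℕ, H f δ (i : ℤ) ≤ f (z i) := fun i =>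
    H_le hC (hzmem i).1 (hzmem i).2
  -- per-step estimate
  have hstep : ∀ i : ℕ, |H f δ ((i : ℤ) + 1) - H f δ (i : ℤ)| ≤
      |f (z (i + 1)) - f (z i)| + ((i : ℝ) + 2) * ε' := by
    intro i
    have hcast : ((i + 1 : ℕ) : ℤ) = (i : ℤ) + 1 := by push_cast; ring
    have hZ1 : H f δ ((i : ℤ) + 1) ≤ f (z (i + 1)) := by
      have := hZwin (i + 1); rwa [hcast] at this
    have hI1 : f (z (i + 1)) ≤ H f δ ((i : ℤ) + 1) + ((i : ℝ) + 2) * ε' := by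
      have := hinv (i + 1); rw [hcast] at this; push_cast at this; linarith
    have hZ0 : H f δ (i : ℤ) ≤ f (z i) := hZwin i
    have hI0 : f (z i) ≤ H f δ (i : ℤ) + ((i : ℝ) + 1) * ε' := hinv i
    rcases le_total (p (i + 1)) (z i) with hcase | hcase
    · -- stay : z (i+1) = z i
      have hzeq : z (i + 1) = z i := by rw [hzs, max_eq_left hcase]
      have hwin : H f δ (i : ℤ) ≤ f (p (i + 1)) := by
        refine H_le hC ?_ ?_
        · refine le_trans ?_ (hp1 (i + 1))
          push_cast; nlinarith
        · exact le_trans hcase (hzmem i).2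
      have hlt := hp3 (i + 1)
      rw [hcast] at hlt
      rw [hzeq, sub_self, abs_zero]
      rw [abs_le]
      constructor
      · rw [hzeq] at hI1; linarith
      · rw [hzeq] at hZ1
        nlinarith [abs_nonneg (f (z i) - f (z i))]
    · rw [abs_le]
      constructor
      · -- H i - H (i+1) ≤ |Δf| + ...
        have h1 : H f δ (i : ℤ) - H f δ ((i : ℤ) + 1) ≤ f (z i) - f (z (i + 1)) +
            ((i : ℝ) + 2) * ε' := by linarith
        have h2 := neg_abs_le (f (z (i + 1)) - f (z i))
        linarith
      · have h1 : H f δ ((i : ℤ) + 1) - H f δ (i : ℤ) ≤ f (z (i + 1)) - f (z i) +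
            ((i : ℝ) + 1) * ε' := by linarith
        have h2 := le_abs_self (f (z (i + 1)) - f (z i))
        nlinarith
  -- sum up
  have hsum : ∑ j ∈ Finset.range m, |H f δ ((j : ℤ) + 1) - H f δ (j : ℤ)| ≤
      (∑ j ∈ Finset.range m, |f (z (j + 1)) - f (z j)|) + (η : ℝ) := by
    have h1 : ∀ j ∈ Finset.range m, |H f δ ((j : ℤ) + 1) - H f δ (j : ℤ)| ≤
        |f (z (j + 1)) - f (z j)| + ((m : ℝ) + 1) * ε' := by
      intro j hj
      rw [Finset.mem_range] at hj
      refine le_trans (hstep j) ?_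
      have : ((j : ℝ) + 2) ≤ (m : ℝ) + 1 := by
        have : (j : ℝ) + 1 ≤ (m : ℝ) := by exact_mod_cast hj
        linarith
      nlinarith
    refine le_trans (Finset.sum_le_sum h1) ?_
    rw [Finset.sum_add_distrib, Finset.sum_const, Finset.card_range, nsmul_eq_mul]
    have hd : (0:ℝ) < (m : ℝ) * ((m : ℝ) + 1) + 1 := by positivity
    have hbig : (m : ℝ) * (((m : ℝ) + 1) * ε') ≤ (η : ℝ) := by
      have hfrac : (m : ℝ) * ((m : ℝ) + 1) / ((m : ℝ) * ((m : ℝ) + 1) + 1) ≤ 1 :=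
        (div_le_one hd).2 (by linarith)
      calc (m : ℝ) * (((m : ℝ) + 1) * ε')
          = (η : ℝ) * ((m : ℝ) * ((m : ℝ) + 1) / ((m : ℝ) * ((m : ℝ) + 1) + 1)) := by
            rw [hε'def]; ring
        _ ≤ (η : ℝ) * 1 := mul_le_mul_of_nonneg_left hfrac η.coe_nonneg
        _ = (η : ℝ) := mul_one _
    linarith
  -- conclude in ℝ≥0∞
  have hz' : Monotone (fun i => z (min i m)) := fun a b hab =>
    hzmono (min_le_min_right m hab)
  have hmem : ∀ i : ℕ, z (min i m) ∈ Icc (-δ) (((m : ℝ) + 1) * δ) := by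
    intro i
    have h1 := (hzmem (min i m)).1
    have h2 := (hzmem (min i m)).2
    have hle : (((min i m : ℕ) : ℤ) : ℝ) ≤ (m : ℝ) := by exact_mod_cast min_le_right i m
    have hge : (0:ℝ) ≤ (((min i m : ℕ) : ℤ) : ℝ) := by positivity
    constructor
    · nlinarith
    · nlinarith
  have hsum2 := eVariationOn.sum_le (f := f) (n := m) hz' hmem
  calc ∑ j ∈ Finset.range m, ENNReal.ofReal |H f δ ((j:ℤ)+1) - H f δ (j:ℤ)|
      = ENNReal.ofReal (∑ j ∈ Finset.range m, |H f δ ((j:ℤ)+1) - H f δ (j:ℤ)|) :=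
        (ENNReal.ofReal_sum_of_nonneg (fun i _ => abs_nonneg _)).symm
    _ ≤ ENNReal.ofReal ((∑ j ∈ Finset.range m, |f (z (j+1)) - f (z j)|) + (η:ℝ)) :=
        ENNReal.ofReal_le_ofReal hsum
    _ ≤ ENNReal.ofReal (∑ j ∈ Finset.range m, |f (z (j+1)) - f (z j)|) +
          ENNReal.ofReal (η:ℝ) := ENNReal.ofReal_add_le
    _ = (∑ j ∈ Finset.range m, ENNReal.ofReal |f (z (j+1)) - f (z j)|) + (η : ℝ≥0∞) := by
        rw [ENNReal.ofReal_sum_of_nonneg (fun i _ => abs_nonneg _), ENNReal.ofReal_coe_nnreal]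
    _ ≤ eVariationOn f (Icc (-δ) (((m : ℝ) + 1) * δ)) + (η : ℝ≥0∞) := by
        refine add_le_add ?_ le_rfl
        refine le_trans (le_of_eq ?_) hsum2
        refine Finset.sum_congr rfl fun i hi => ?_
        rw [Finset.mem_range] at hi
        rw [edist_dist, Real.dist_eq, min_eq_left (by omega : i + 1 ≤ m),
          min_eq_left (by omega : i ≤ m)]

end basic
end Aprox1Aux

set_option maxHeartbeats 1000000 in
/-- Lemma 3.2 (Aprox1), lower half: a periodic, bounded, piecewise monotone BV
function which is continuous at `0` and at every local maximum point not lying in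
an interval of constancy admits an increasing approximation from below by
continuous periodic functions, preserving local minima, monotonicity of pieces,
and with asymptotic control of the total variation. -/
theorem approximation_from_below
    (L : ℝ) (hL : 0 < L) (K : ℕ) (hK : 0 < K)
    (t : Fin (K + 1) → ℝ) (ht : StrictMono t)
    (ht0 : t 0 = 0) (htK : t (Fin.last K) = L)
    (f : ℝ → ℝ)
    (hper : Function.Periodic f L)
    (hbd : ∃ C : ℝ, ∀ x : ℝ, |f x| ≤ C)
    (hBV : eVariationOn f (Set.Icc 0 L) ≠ ⊤)
    (hmono : ∀ i : Fin K,
      MonotoneOn f (Set.Icc (t i.castSucc) (t i.succ)) ∨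
      AntitoneOn f (Set.Icc (t i.castSucc) (t i.succ)))
    (hcont0 : ContinuousAt f 0)
    (hcontmax : ∀ x : ℝ, IsLocalMax f x →
      (¬ ∃ u v : ℝ, u < x ∧ x < v ∧ ∀ y ∈ Set.Ioo u v, f y = f x) →
      ContinuousAt f x) :
    ∃ g : ℕ → ℝ → ℝ,
      (∀ n : ℕ, 1 ≤ n → Continuous (g n) ∧ Function.Periodic (g n) L) ∧
      -- (1) monotone approximation from below
      (∀ n : ℕ, 1 ≤ n → ∀ x : ℝ, g n x ≤ g (n + 1) x ∧ g n x ≤ f x) ∧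
      -- (2) convergence at continuity points
      (∀ x : ℝ, ContinuousAt f x →
        Tendsto (fun n : ℕ => g n x) atTop (nhds (f x))) ∧
      -- (3) local minima are preserved
      (∀ x₀ : ℝ, ContinuousAt f x₀ → IsLocalMin f x₀ →
        ∀ᶠ n : ℕ in atTop, g n x₀ = f x₀) ∧
      -- (4) monotonicity is preserved in the interior of monotone intervals
      (∀ s u : ℝ, ∀ n : ℕ, 1 ≤ n → s + 3 / (n : ℝ) ≤ u - 3 / (n : ℝ) →
        (MonotoneOn f (Set.Ioo s u) →
          MonotoneOn (g n) (Set.Icc (s + 3 / (n : ℝ)) (u - 3 / (n : ℝ)))) ∧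
        (AntitoneOn f (Set.Ioo s u) →
          AntitoneOn (g n) (Set.Icc (s + 3 / (n : ℝ)) (u - 3 / (n : ℝ))))) ∧
      -- (5) asymptotic control of the total variation
      Filter.limsup (fun n : ℕ => eVariationOn (g n) (Set.Icc 0 L)) atTop ≤
        eVariationOn f (Set.Icc 0 L) := by
  classical
  obtain ⟨C, hC⟩ := hbd
  obtain ⟨M₀, hM₀⟩ := pow_unbounded_of_one_lt L (one_lt_two (α := ℝ))
  set δ : ℕ → ℝ := fun n => L / 2 ^ (n + M₀) with hδdef
  have hδpos : ∀ n, 0 < δ n := fun n => by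
    rw [hδdef]; positivity
  have hδhalf : ∀ n, δ (n + 1) = δ n / 2 := by
    intro n
    rw [hδdef]
    simp only
    rw [show n + 1 + M₀ = (n + M₀) + 1 by ring, pow_succ, ← div_div]
  have hδ2 : ∀ n, δ n ≤ (1 / 2 : ℝ) ^ n := by
    intro n
    rw [hδdef]
    simp only
    rw [div_pow, one_pow, div_le_div_iff₀ (by positivity) (by positivity), pow_add]
    have h2 : (0:ℝ) < 2 ^ n := by positivity
    nlinarith [hM₀.le]
  have hδ0 : Tendsto δ atTop (𝓝 0) :=
    squeeze_zero (fun n => (hδpos n).le) hδ2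
      (tendsto_pow_atTop_nhds_zero_of_lt_one (by norm_num) (by norm_num))
  have hδN : ∀ n, ((2 ^ (n + M₀) : ℤ) : ℝ) * δ n = L := by
    intro n
    rw [hδdef]
    push_cast
    field_simp
  clear_value δ
  -- the approximating sequence
  refine ⟨fun n => Aprox1Aux.G f (δ n), ?_, ?_, ?_, ?_, ?_, ?_⟩
  · -- continuity and periodicity
    intro n _
    exact ⟨Aprox1Aux.G_continuous (hδpos n) hC,
      Aprox1Aux.G_periodic (hδpos n) (hδN n) hper⟩
  · -- monotone approximation from below
    intro n _ x
    constructor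
    · show Aprox1Aux.G f (δ n) x ≤ Aprox1Aux.G f (δ (n + 1)) x
      rw [hδhalf n]
      exact Aprox1Aux.G_refine (hδpos n) hC x
    · exact Aprox1Aux.G_le_f (hδpos n) hC x
  · -- convergence at continuity points
    intro x hx
    rw [Metric.tendsto_atTop]
    intro ε hε
    obtain ⟨d, hd, hball⟩ := Metric.continuousAt_iff.1 hx (ε / 2) (by linarith)
    obtain ⟨N₀, hN₀⟩ := (hδ0.eventually_lt_const (show (0:ℝ) < d / 2 by linarith)).exists_forall_of_atTop
    refine ⟨N₀, fun n hn => ?_⟩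
    have hδn := hδpos n
    have hδd : δ n < d / 2 := hN₀ n hn
    have hgle : Aprox1Aux.G f (δ n) x ≤ f x := Aprox1Aux.G_le_f hδn hC x
    set j := ⌊x / δ n⌋ with hj
    have hj1 : ((j : ℤ) : ℝ) * δ n ≤ x := Aprox1Aux.cell_left hδn x
    have hj2 : x < (((j : ℤ) : ℝ) + 1) * δ n := Aprox1Aux.cell_right hδn x
    have hnear : ∀ y : ℝ, ((j : ℝ) - 1) * δ n ≤ y → y ≤ ((j : ℝ) + 2) * δ n →
        f x - ε / 2 ≤ f y := by
      intro y h1 h2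
      have hdist : dist y x < d := by
        rw [Real.dist_eq, abs_lt]
        constructor <;> nlinarith
      have := hball hdist
      rw [Real.dist_eq, abs_lt] at this
      linarith
    have hlow : f x - ε / 2 ≤ Aprox1Aux.G f (δ n) x := by
      refine Aprox1Aux.G_ge hδn ?_ ?_
      · exact Aprox1Aux.le_H hδn fun y h1 h2 => hnear y h1 (by nlinarith)
      · refine Aprox1Aux.le_H hδn fun y h1 h2 => hnear y ?_ ?_ <;> push_cast at h1 h2 <;>
          nlinarith
    rw [Real.dist_eq, abs_lt]
    constructor <;> nlinarith
  · -- local minima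
    intro x₀ _ hmin
    obtain ⟨d, hd, hball⟩ := Metric.eventually_nhds_iff.1 hmin
    filter_upwards [hδ0.eventually_lt_const (show (0:ℝ) < d / 2 by linarith)] with n hδd
    have hδn := hδpos n
    set j := ⌊x₀ / δ n⌋ with hj
    have hj1 : ((j : ℤ) : ℝ) * δ n ≤ x₀ := Aprox1Aux.cell_left hδn x₀
    have hj2 : x₀ < (((j : ℤ) : ℝ) + 1) * δ n := Aprox1Aux.cell_right hδn x₀
    have hnear : ∀ y : ℝ, ((j : ℝ) - 1) * δ n ≤ y → y ≤ ((j : ℝ) + 2) * δ n →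
        f x₀ ≤ f y := by
      intro y h1 h2
      refine hball ?_
      rw [Real.dist_eq, abs_lt]
      constructor <;> nlinarith
    have hH1 : Aprox1Aux.H f (δ n) j = f x₀ := by
      refine le_antisymm (Aprox1Aux.H_le hC (by nlinarith) hj2.le) ?_
      exact Aprox1Aux.le_H hδn fun y h1 h2 => hnear y h1 (by nlinarith)
    have hH2 : Aprox1Aux.H f (δ n) (j + 1) = f x₀ := by
      refine le_antisymm ?_ ?_
      · refine Aprox1Aux.H_le hC ?_ ?_ <;> push_cast <;> nlinarith
      · refine Aprox1Aux.le_H hδn fun y h1 h2 => hnear y ?_ ?_ <;> push_cast at h1 h2 <;>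
          nlinarith
    rw [Aprox1Aux.G_cell hδn hj1 hj2.le, hH1, hH2]
    ring
  · -- monotonicity on monotone intervals
    intro s u n hn1 hsu
    have hδn := hδpos n
    have hnR : (1:ℝ) ≤ (n : ℝ) := by exact_mod_cast hn1
    have hnpos : (0:ℝ) < (n : ℝ) := by linarith
    have h2δ : 2 * δ n < 3 / (n : ℝ) := by
      have h1 : δ n ≤ (1 / 2 : ℝ) ^ n := hδ2 n
      have h2 : ((n : ℝ)) < 2 ^ n := by
        exact_mod_cast Nat.lt_pow_self (n := n) one_lt_two
      have h3 : (1 / 2 : ℝ) ^ n = 1 / 2 ^ n := by rw [div_pow, one_pow]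
      have h4 : (1:ℝ) / 2 ^ n < 1 / (n : ℝ) := by
        apply div_lt_div_of_pos_left one_pos hnpos h2
      have h5 : δ n < 1 / (n : ℝ) := by rw [h3] at h1; linarith
      have h6 : 2 / (n : ℝ) < 3 / (n : ℝ) := (div_lt_div_iff_of_pos_right hnpos).2 (by norm_num)
      have h7 : δ n < 1 / (n : ℝ) → 2 * δ n < 2 / (n : ℝ) := by
        intro h
        have : 2 * δ n < 2 * (1 / (n : ℝ)) := by linarith
        rw [mul_one_div] at this
        exact this
      linarith [h7 h5]
    constructor
    · intro hfm
      refine Aprox1Aux.G_monoOn hδn ?_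
      intro j hjA hjB
      have hmem1 : s < ((j : ℝ) - 1) * δ n := by nlinarith
      have hmem2 : ((j : ℝ) - 1) * δ n < u := by nlinarith
      refine Aprox1Aux.le_H hδn ?_
      intro y h1 h2
      push_cast at h1 h2
      have hy1 : s < y := by nlinarith
      have hy2 : y < u := by nlinarith
      calc Aprox1Aux.H f (δ n) j ≤ f (((j : ℝ) - 1) * δ n) :=
            Aprox1Aux.H_le hC le_rfl (by nlinarith)
        _ ≤ f y := hfm ⟨hmem1, hmem2⟩ ⟨hy1, hy2⟩ (by nlinarith)
    · intro hfa
      refine Aprox1Aux.G_antiOn hδn ?_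
      intro j hjA hjB
      have hmem1 : s < ((j : ℝ) + 2) * δ n := by nlinarith
      have hmem2 : ((j : ℝ) + 2) * δ n < u := by nlinarith
      refine Aprox1Aux.le_H hδn ?_
      intro y h1 h2
      have hy1 : s < y := by nlinarith
      have hy2 : y < u := by nlinarith
      calc Aprox1Aux.H f (δ n) (j + 1) ≤ f (((j : ℝ) + 2) * δ n) := by
            refine Aprox1Aux.H_le hC ?_ ?_ <;> push_cast <;> nlinarith
        _ ≤ f y := hfa ⟨hy1, hy2⟩ ⟨hmem1, hmem2⟩ (by nlinarith)
  · -- the variation bound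
    set V := eVariationOn f (Icc 0 L) with hVdef
    -- breakpoints adjacent to 0 and L
    set i0 : Fin K := ⟨0, hK⟩ with hi0
    set iK : Fin K := ⟨K - 1, by omega⟩ with hiK
    have ht00 : t i0.castSucc = 0 := by
      have e : i0.castSucc = (0 : Fin (K + 1)) := by
        ext; simp [hi0]
      rw [e, ht0]
    have hiKsucc : iK.succ = Fin.last K := by
      ext; simp [hiK]; omega
    set τ₁ : ℝ := t i0.succ with hτ₁
    set τ₂ : ℝ := t iK.castSucc with hτ₂
    have hτ₁pos : 0 < τ₁ := by
      calc (0:ℝ) = t i0.castSucc := ht00.symm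
        _ < τ₁ := ht (Fin.castSucc_lt_succ (i := i0))
    have hτ₂lt : τ₂ < L := by
      calc τ₂ < t iK.succ := ht (Fin.castSucc_lt_succ (i := iK))
        _ = L := by rw [hiKsucc, htK]
    have hm0 := hmono i0
    rw [ht00] at hm0
    have hmK := hmono iK
    rw [hiKsucc, htK] at hmK
    -- end-piece estimates
    have hend : ∀ n : ℕ, δ n ≤ τ₁ → δ n ≤ L - τ₂ →
        eVariationOn f (Icc (-δ n) 0) ≤ ENNReal.ofReal |f 0 - f (-δ n)| ∧
        eVariationOn f (Icc L (L + δ n)) ≤ ENNReal.ofReal |f (δ n) - f 0| := by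
      intro n h1 h2
      have hδn := hδpos n
      have hshift : ∀ a : ℝ, a ∈ Icc (-δ n) (0:ℝ) → a + L ∈ Icc τ₂ L := by
        rintro a ⟨ha1, ha2⟩
        exact ⟨by linarith, by linarith⟩
      have hfs : ∀ a : ℝ, f a = f (a + L) := fun a => (hper a).symm
      have hshift2 : ∀ b : ℝ, b ∈ Icc L (L + δ n) → b - L ∈ Icc (0:ℝ) τ₁ := by
        rintro b ⟨hb1, hb2⟩
        exact ⟨by linarith, by linarith⟩
      have hfs2 : ∀ b : ℝ, f b = f (b - L) := by
        intro b
        have := hper (b - L)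
        rw [sub_add_cancel] at this
        exact this
      have hLd : f (L + δ n) = f (δ n) := by
        have := hper (δ n); rw [add_comm] at this; exact this
      have hL0 : f L = f 0 := by
        have := hper 0; rwa [zero_add] at this
      constructor
      · rcases hmK with hmon | hant
        · have hm : MonotoneOn f (Icc (-δ n) 0) := by
            intro a ha b hb hab
            rw [hfs a, hfs b]
            exact hmon (hshift a ha) (hshift b hb) (by linarith)
          refine (Aprox1Aux.evar_mono_le (by linarith) hm).trans ?_
          exact ENNReal.ofReal_le_ofReal (le_abs_self _)
        · have hm : AntitoneOn f (Icc (-δ n) 0) := by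
            intro a ha b hb hab
            rw [hfs a, hfs b]
            exact hant (hshift a ha) (hshift b hb) (by linarith)
          refine (Aprox1Aux.evar_anti_le (by linarith) hm).trans ?_
          refine ENNReal.ofReal_le_ofReal ?_
          have := neg_abs_le (f 0 - f (-δ n))
          linarith
      · rcases hm0 with hmon | hant
        · have hm : MonotoneOn f (Icc L (L + δ n)) := by
            intro a ha b hb hab
            rw [hfs2 a, hfs2 b]
            exact hmon (hshift2 a ha) (hshift2 b hb) (by linarith)
          refine (Aprox1Aux.evar_mono_le (by linarith) hm).trans ?_
          rw [hLd, hL0]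
          exact ENNReal.ofReal_le_ofReal (le_abs_self _)
        · have hm : AntitoneOn f (Icc L (L + δ n)) := by
            intro a ha b hb hab
            rw [hfs2 a, hfs2 b]
            exact hant (hshift2 a ha) (hshift2 b hb) (by linarith)
          refine (Aprox1Aux.evar_anti_le (by linarith) hm).trans ?_
          rw [hLd, hL0]
          refine ENNReal.ofReal_le_ofReal ?_
          have := neg_abs_le (f (δ n) - f 0)
          linarith
    -- the full bound for good n
    have hbound : ∀ n : ℕ, δ n ≤ τ₁ → δ n ≤ L - τ₂ →
        eVariationOn (Aprox1Aux.G f (δ n)) (Icc 0 L) ≤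
          V + (ENNReal.ofReal |f 0 - f (-δ n)| + ENNReal.ofReal |f (δ n) - f 0|) := by
      intro n h1 h2
      have hδn := hδpos n
      set m : ℕ := 2 ^ (n + M₀) with hm
      have hmδ : (m : ℝ) * δ n = L := by
        have h := hδN n
        rw [hm]
        push_cast at h ⊢
        exact h
      have e1 : eVariationOn (Aprox1Aux.G f (δ n)) (Icc 0 L) ≤
          ∑ j ∈ Finset.range m, ENNReal.ofReal
            |Aprox1Aux.H f (δ n) ((j : ℤ) + 1) - Aprox1Aux.H f (δ n) (j : ℤ)| := by
        rw [← hmδ]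
        exact Aprox1Aux.evar_grid hδn m
      have e2 := Aprox1Aux.H_sum_le hδn hC m
      have e3 : ((m : ℝ) + 1) * δ n = L + δ n := by
        rw [add_mul, one_mul, hmδ]
      rw [e3] at e2
      have e4 : eVariationOn f (Icc (-δ n) (L + δ n)) =
          eVariationOn f (Icc (-δ n) 0) + (V + eVariationOn f (Icc L (L + δ n))) := by
        rw [Aprox1Aux.evar_split f (by linarith : -δ n ≤ (0:ℝ)) (by linarith : (0:ℝ) ≤ L + δ n),
          Aprox1Aux.evar_split f hL.le (by linarith : L ≤ L + δ n)]
      obtain ⟨hEl, hEr⟩ := hend n h1 h2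
      calc eVariationOn (Aprox1Aux.G f (δ n)) (Icc 0 L) ≤
          eVariationOn f (Icc (-δ n) (L + δ n)) := e1.trans e2
        _ = eVariationOn f (Icc (-δ n) 0) + (V + eVariationOn f (Icc L (L + δ n))) := e4
        _ ≤ ENNReal.ofReal |f 0 - f (-δ n)| + (V + ENNReal.ofReal |f (δ n) - f 0|) := by
            gcongr
        _ = V + (ENNReal.ofReal |f 0 - f (-δ n)| + ENNReal.ofReal |f (δ n) - f 0|) := by
            ring
    -- eventual bound and limsup
    have hδev : ∀ᶠ n in atTop, δ n ≤ τ₁ ∧ δ n ≤ L - τ₂ := by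
      filter_upwards [hδ0.eventually_lt_const hτ₁pos,
        hδ0.eventually_lt_const (show (0:ℝ) < L - τ₂ by linarith)] with n ha hb
      exact ⟨ha.le, hb.le⟩
    have hVle : ∀ᶠ n in atTop,
        eVariationOn (Aprox1Aux.G f (δ n)) (Icc 0 L) ≤
          V + (ENNReal.ofReal |f 0 - f (-δ n)| + ENNReal.ofReal |f (δ n) - f 0|) := by
      filter_upwards [hδev] with n hn
      exact hbound n hn.1 hn.2
    have he0 : Tendsto (fun n => ENNReal.ofReal |f 0 - f (-δ n)| +
        ENNReal.ofReal |f (δ n) - f 0|) atTop (𝓝 0) := by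
      have hneg : Tendsto (fun n => -δ n) atTop (𝓝 0) := by
        have := hδ0.neg
        rwa [neg_zero] at this
      have hc1 : Tendsto (fun n => f (-δ n)) atTop (𝓝 (f 0)) :=
        hcont0.tendsto.comp hneg
      have hc2 : Tendsto (fun n => f (δ n)) atTop (𝓝 (f 0)) :=
        hcont0.tendsto.comp hδ0
      have h1 : Tendsto (fun n => |f 0 - f (-δ n)|) atTop (𝓝 0) := by
        have := ((tendsto_const_nhds : Tendsto (fun _ : ℕ => f 0) atTop (𝓝 (f 0))).sub hc1).abs
        simpa using this
      have h2 : Tendsto (fun n => |f (δ n) - f 0|) atTop (𝓝 0) := by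
        have := (hc2.sub (tendsto_const_nhds : Tendsto (fun _ : ℕ => f 0) atTop (𝓝 (f 0)))).abs
        simpa using this
      have := (ENNReal.tendsto_ofReal h1).add (ENNReal.tendsto_ofReal h2)
      simpa using this
    calc Filter.limsup (fun n : ℕ => eVariationOn (Aprox1Aux.G f (δ n)) (Icc 0 L)) atTop ≤
        Filter.limsup (fun n : ℕ => V + (ENNReal.ofReal |f 0 - f (-δ n)| +
          ENNReal.ofReal |f (δ n) - f 0|)) atTop := Filter.limsup_le_limsup hVle
      _ = V := by
        have ht : Tendsto (fun n : ℕ => V + (ENNReal.ofReal |f 0 - f (-δ n)| +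
            ENNReal.ofReal |f (δ n) - f 0|)) atTop (𝓝 (V + 0)) :=
          tendsto_const_nhds.add he0
        rw [add_zero] at ht
        exact ht.limsup_eq
end

section
/- Let L > 0, let K be a positive integer, and let 0 = t₀ < t₁ < ⋯ < t_K = L be a partition of [0, L]. Let f : ℝ → ℝ be L-periodic, bounded, of bounded variation on [0, L], monotone (nondecreasing or nonincreasing) on each interval [t_{i−1}, t_i], continuous at 0, and continuous at every point at which f attains a local minimum and which is not contained in an open interval on which f is constant. Then there exists a sequence (h_n)_{n≥1} of continuous L-periodic functions ℝ → ℝ such that: (1) h_n(x) ≥ h_{n+1}(x) ≥ f(x) for all x ∈ ℝ and all n; (2) h_n(x) → f(x) as n → ∞ at every point x at which f is continuous; (3) for every point x₀ at which f is continuous and attains a local maximum, h_n(x₀) = f(x₀) for all sufficiently large n; (4) for every open interval (s, t) on which f is monotone nondecreasing (respectively nonincreasing) and for every n with s + 3/n ≤ t − 3/n, the function h_n is monotone nondecreasing (respectively nonincreasing) on [s + 3/n, t − 3/n]; (5) limsup_{n→∞} Var(h_n; [0, L]) ≤ Var(f; [0, L]). -/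
open Filter Set MeasureTheory intervalIntegral
namespace AFA


noncomputable def swin (f : ℝ → ℝ) (r y : ℝ) : ℝ := sSup (f '' Ioo (y - r) (y + r))


variable {f : ℝ → ℝ} {C r : ℝ}

lemma win_nonempty (hr : 0 < r) (y : ℝ) : (f '' Ioo (y - r) (y + r)).Nonempty :=
  ⟨f y, mem_image_of_mem f (by constructor <;> linarith)⟩

lemma win_bdd (hbd : ∀ x, |f x| ≤ C) (s : Set ℝ) : BddAbove (f '' s) :=
  ⟨C, by rintro z ⟨x, -, rfl⟩; exact (abs_le.1 (hbd x)).2⟩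

lemma le_swin (hbd : ∀ x, |f x| ≤ C) {x y : ℝ} (h1 : y - r < x) (h2 : x < y + r) :
    f x ≤ swin f r y :=
  le_csSup (win_bdd hbd _) (mem_image_of_mem f ⟨h1, h2⟩)

lemma swin_le (hr : 0 < r) {y c : ℝ} (h : ∀ z, y - r < z → z < y + r → f z ≤ c) :
    swin f r y ≤ c :=
  csSup_le ((win_nonempty hr y).mono (image_mono (f := f) (by rfl))) (by rintro z ⟨x, hx, rfl⟩; exact h x hx.1 hx.2)

lemma self_le_swin (hbd : ∀ x, |f x| ≤ C) (hr : 0 < r) (y : ℝ) : f y ≤ swin f r y :=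
  le_swin hbd (by linarith) (by linarith)

lemma abs_swin_le (hbd : ∀ x, |f x| ≤ C) (hr : 0 < r) (y : ℝ) : |swin f r y| ≤ C := by
  rw [abs_le]
  constructor
  · exact le_trans (neg_le_of_abs_le (hbd y)) (self_le_swin hbd hr y)
  · exact swin_le hr fun z _ _ => (abs_le.1 (hbd z)).2

lemma swin_lsc (hbd : ∀ x, |f x| ≤ C) (hr : 0 < r) : LowerSemicontinuous (swin f r) := by
  intro y c hc
  obtain ⟨w, ⟨z, hz, rfl⟩, hw⟩ := exists_lt_of_lt_csSup (win_nonempty hr y) hc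
  have : Ioo (z - r) (z + r) ∈ nhds y := Ioo_mem_nhds (by linarith [hz.2]) (by linarith [hz.1])
  filter_upwards [this] with y' hy'
  exact lt_of_lt_of_le hw (le_swin hbd (by linarith [hy'.2]) (by linarith [hy'.1]))

lemma swin_measurable (hbd : ∀ x, |f x| ≤ C) (hr : 0 < r) : Measurable (swin f r) :=
  (swin_lsc hbd hr).measurable

lemma swin_periodic {L : ℝ} (hper : Function.Periodic f L) (r : ℝ) :
    Function.Periodic (swin f r) L := by
  intro y
  unfold swin
  have himg : Ioo (y + L - r) (y + L + r) = (fun z => z + L) '' Ioo (y - r) (y + r) := by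
    rw [Set.image_add_const_Ioo]; ring_nf
  rw [himg, image_image]
  congr 1
  ext w
  simp only [mem_image]
  constructor
  · rintro ⟨z, hz, rfl⟩; exact ⟨z, hz, (hper z).symm ▸ rfl⟩
  · rintro ⟨z, hz, rfl⟩; exact ⟨z, hz, hper z⟩


noncomputable def avg (g : ℝ → ℝ) (d x : ℝ) : ℝ := (2 * d)⁻¹ * ∫ y in (x - d)..(x + d), g y

variable {g : ℝ → ℝ} {C d : ℝ}

lemma intInt (hg : Measurable g) (hbd : ∀ x, |g x| ≤ C) (a b : ℝ) :
    IntervalIntegrable g volume a b := by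
  constructor <;>
  · refine ⟨hg.aestronglyMeasurable, ?_⟩
    apply MeasureTheory.HasFiniteIntegral.of_bounded (C := C)
    exact ae_of_all _ fun x => by simpa [Real.norm_eq_abs] using hbd x

lemma avg_continuous (hg : Measurable g) (hbd : ∀ x, |g x| ≤ C) (hd : 0 < d) :
    Continuous (avg g d) := by
  have hF : Continuous fun x : ℝ => ∫ y in (0:ℝ)..x, g y :=
    intervalIntegral.continuous_primitive (fun a b => intInt hg hbd a b) 0
  have heq : avg g d = fun x => (2 * d)⁻¹ *
      ((∫ y in (0:ℝ)..(x + d), g y) - ∫ y in (0:ℝ)..(x - d), g y) := by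
    funext x
    unfold avg
    rw [← intervalIntegral.integral_add_adjacent_intervals (intInt hg hbd 0 (x - d))
      (intInt hg hbd (x - d) (x + d))]
    ring
  rw [heq]
  exact continuous_const.mul ((hF.comp (continuous_id.add continuous_const)).sub
    (hF.comp (continuous_id.sub continuous_const)))

lemma avg_periodic {L : ℝ} (hper : Function.Periodic g L) (d : ℝ) :
    Function.Periodic (avg g d) L := by
  intro x
  unfold avg
  congr 1
  have h1 : ∀ y : ℝ, g (y + L) = g y := hper
  calc ∫ y in (x + L - d)..(x + L + d), g y
      = ∫ y in (x - d)..(x + d), g (y + L) := by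
        rw [intervalIntegral.integral_comp_add_right]; ring_nf
    _ = ∫ y in (x - d)..(x + d), g y := by simp only [h1]

lemma le_avg (hg : Measurable g) (hbd : ∀ x, |g x| ≤ C) (hd : 0 < d) {x c : ℝ}
    (h : ∀ y ∈ Icc (x - d) (x + d), c ≤ g y) : c ≤ avg g d x := by
  have key : 2 * d * c ≤ ∫ y in (x - d)..(x + d), g y := by
    have h0 : (∫ _ in (x - d)..(x + d), c) = 2 * d * c := by
      rw [intervalIntegral.integral_const]; simp [smul_eq_mul]; ring_nf; left; trivial
    rw [← h0]
    exact intervalIntegral.integral_mono_on (by linarith) intervalIntegrable_const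
      (intInt hg hbd _ _) (fun y hy => h y hy)
  have := mul_le_mul_of_nonneg_left key (by positivity : (0:ℝ) ≤ (2 * d)⁻¹)
  calc c = (2 * d)⁻¹ * (2 * d * c) := by field_simp
    _ ≤ avg g d x := this

lemma avg_le (hg : Measurable g) (hbd : ∀ x, |g x| ≤ C) (hd : 0 < d) {x c : ℝ}
    (h : ∀ y ∈ Icc (x - d) (x + d), g y ≤ c) : avg g d x ≤ c := by
  have key : (∫ y in (x - d)..(x + d), g y) ≤ 2 * d * c := by
    have h0 : (∫ _ in (x - d)..(x + d), c) = 2 * d * c := by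
      rw [intervalIntegral.integral_const]; simp [smul_eq_mul]; ring_nf; left; trivial
    rw [← h0]
    exact intervalIntegral.integral_mono_on (by linarith) (intInt hg hbd _ _)
      intervalIntegrable_const (fun y hy => h y hy)
  have := mul_le_mul_of_nonneg_left key (by positivity : (0:ℝ) ≤ (2 * d)⁻¹)
  calc avg g d x ≤ (2 * d)⁻¹ * (2 * d * c) := this
    _ = c := by field_simp

lemma avg_mono_of_shift (hg : Measurable g) (hbd : ∀ x, |g x| ≤ C) (hd : 0 < d)
    {x₁ x₂ : ℝ} (h12 : x₁ ≤ x₂)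
    (h : ∀ y ∈ Icc (x₁ - d) (x₁ + d), g y ≤ g (y + (x₂ - x₁))) :
    avg g d x₁ ≤ avg g d x₂ := by
  unfold avg
  have h2 : (∫ y in (x₂ - d)..(x₂ + d), g y) = ∫ y in (x₁ - d)..(x₁ + d), g (y + (x₂ - x₁)) := by
    rw [intervalIntegral.integral_comp_add_right]; ring_nf
  rw [h2]
  have key : (∫ y in (x₁ - d)..(x₁ + d), g y) ≤
      ∫ y in (x₁ - d)..(x₁ + d), g (y + (x₂ - x₁)) := by
    refine intervalIntegral.integral_mono_on (by linarith) (intInt hg hbd _ _) ?_ h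
    exact (intInt (hg.comp (measurable_add_const _)) (fun x => hbd _) _ _ : _)
  exact mul_le_mul_of_nonneg_left key (by positivity)



lemma evar_Icc_add (f : ℝ → ℝ) {a b c : ℝ} (hab : a ≤ b) (hbc : b ≤ c) :
    eVariationOn f (Icc a b) + eVariationOn f (Icc b c) = eVariationOn f (Icc a c) := by
  have := eVariationOn.Icc_add_Icc f (s := univ) hab hbc (mem_univ b)
  simpa using this

lemma evar_fin_sub {f : ℝ → ℝ} {a b : ℝ} (hfin : eVariationOn f (Icc a b) ≠ ⊤) {c d : ℝ}
    (h : Icc c d ⊆ Icc a b) : eVariationOn f (Icc c d) ≠ ⊤ := by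
  intro h'
  exact hfin (top_le_iff.1 (h' ▸ eVariationOn.mono f h))

lemma evar_real_mono {f : ℝ → ℝ} {a b : ℝ} (hfin : eVariationOn f (Icc a b) ≠ ⊤) {c d c' d' : ℝ}
    (h1 : Icc c d ⊆ Icc c' d') (h2 : Icc c' d' ⊆ Icc a b) :
    (eVariationOn f (Icc c d)).toReal ≤ (eVariationOn f (Icc c' d')).toReal :=
  ENNReal.toReal_mono (evar_fin_sub hfin h2) (eVariationOn.mono f h1)

lemma evar_real_add_abs {f : ℝ → ℝ} {a b z z' : ℝ} (h1 : a ≤ z) (h2 : z ≤ z') (h3 : z' ≤ b)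
    (hfin : eVariationOn f (Icc a b) ≠ ⊤) :
    (eVariationOn f (Icc a z)).toReal + |f z' - f z| ≤ (eVariationOn f (Icc a z')).toReal := by
  have e1 : ENNReal.ofReal |f z' - f z| = edist (f z') (f z) := by
    rw [edist_dist, Real.dist_eq]
  have e2 : edist (f z') (f z) ≤ eVariationOn f (Icc z z') :=
    eVariationOn.edist_le f (right_mem_Icc.2 h2) (left_mem_Icc.2 h2)
  have e3 : eVariationOn f (Icc a z) + ENNReal.ofReal |f z' - f z| ≤ eVariationOn f (Icc a z') := by
    rw [← evar_Icc_add f h1 h2]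
    exact add_le_add_right (e1 ▸ e2) _
  have fa : eVariationOn f (Icc a z) ≠ ⊤ :=
    evar_fin_sub hfin (Icc_subset_Icc le_rfl (h2.trans h3))
  have fz' : eVariationOn f (Icc a z') ≠ ⊤ := evar_fin_sub hfin (Icc_subset_Icc le_rfl h3)
  calc (eVariationOn f (Icc a z)).toReal + |f z' - f z|
      = ((eVariationOn f (Icc a z)) + ENNReal.ofReal |f z' - f z|).toReal := by
        rw [ENNReal.toReal_add fa ENNReal.ofReal_ne_top, ENNReal.toReal_ofReal (abs_nonneg _)]
    _ ≤ _ := ENNReal.toReal_mono fz' e3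

lemma sum_edist_eq (f : ℝ → ℝ) (u : ℕ → ℝ) (m : ℕ) :
    ∑ i ∈ Finset.range m, edist (f (u (i+1))) (f (u i))
      = ENNReal.ofReal (∑ i ∈ Finset.range m, |f (u (i+1)) - f (u i)|) := by
  rw [ENNReal.ofReal_sum_of_nonneg (fun i _ => abs_nonneg _)]
  refine Finset.sum_congr rfl fun i _ => ?_
  rw [edist_dist, Real.dist_eq]

lemma sum_abs_le_evar {f : ℝ → ℝ} {s : Set ℝ} (hfin : eVariationOn f s ≠ ⊤) {u : ℕ → ℝ}
    (hu : Monotone u) (us : ∀ i, u i ∈ s) (m : ℕ) :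
    ∑ i ∈ Finset.range m, |f (u (i+1)) - f (u i)| ≤ (eVariationOn f s).toReal := by
  have h := eVariationOn.sum_le (f := f) (n := m) hu us
  rw [sum_edist_eq f u m] at h
  exact (ENNReal.ofReal_le_iff_le_toReal hfin).1 h


set_option maxHeartbeats 1000000 in
lemma evar_swin_le {f : ℝ → ℝ} {C r : ℝ} (hbd : ∀ x, |f x| ≤ C) (hr : 0 < r) {a b : ℝ} :
    eVariationOn (swin f r) (Icc a b) ≤ eVariationOn f (Icc (a - r) (b + r)) := by
  by_cases hfin : eVariationOn f (Icc (a - r) (b + r)) = ⊤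
  · rw [hfin]; exact le_top
  refine iSup_le ?_
  rintro ⟨m, ⟨u, hu, us⟩⟩
  dsimp only
  rw [sum_edist_eq (swin f r) u m, ENNReal.ofReal_le_iff_le_toReal hfin]
  refine le_of_forall_pos_le_add ?_
  intro ε hε
  set V : ℝ := (eVariationOn f (Icc (a - r) (b + r))).toReal with hVdef
  have hden : (0:ℝ) < 4 * (m:ℝ)^2 + 12 * m + 2 := by positivity
  set ε' : ℝ := ε / (4 * (m:ℝ)^2 + 12 * m + 2) with hε'def
  have hε' : 0 < ε' := div_pos hε hden
  set Vr : ℝ → ℝ := fun z => (eVariationOn f (Icc (a - r) z)).toReal with hVr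
  have hVrle : ∀ z, a - r ≤ z → z ≤ b + r → Vr z ≤ V := fun z h1 h2 =>
    evar_real_mono hfin (Icc_subset_Icc le_rfl h2) Subset.rfl
  have hVrpay : ∀ z z', a - r ≤ z → z ≤ z' → z' ≤ b + r →
      Vr z + (f z' - f z) ≤ Vr z' := by
    intro z z' h1 h2 h3
    have h5 := evar_real_add_abs (f := f) h1 h2 h3 hfin
    have h4 : f z' - f z ≤ |f z' - f z| := le_abs_self _
    linarith
  have hVrpay2 : ∀ z z', a - r ≤ z → z ≤ z' → z' ≤ b + r →
      Vr z + (f z - f z') ≤ Vr z' := by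
    intro z z' h1 h2 h3
    have h5 := evar_real_add_abs (f := f) h1 h2 h3 hfin
    have h4 : f z - f z' ≤ |f z' - f z| := by
      rw [abs_sub_comm]; exact le_abs_self _
    linarith
  have key : ∀ k : ℕ, k ≤ m → ∃ z : ℝ, (a - r ≤ z ∧ z ≤ b + r) ∧ z < u k + r ∧
      f z ≤ swin f r (u k) + (2 * (k:ℝ) + 1) * ε' ∧
      (∑ i ∈ Finset.range k, |swin f r (u (i+1)) - swin f r (u i)|) + (swin f r (u k) - f z)
        ≤ Vr z + ((k:ℝ) * (4 * (m:ℝ) + 10) + 1) * ε' := by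
    intro k
    induction k with
    | zero =>
      intro _
      obtain ⟨w, ⟨z, hzwin, rfl⟩, hw⟩ :=
        exists_lt_of_lt_csSup (win_nonempty hr (u 0))
          (show swin f r (u 0) - ε' < swin f r (u 0) by linarith)
      have hfzle : f z ≤ swin f r (u 0) := le_swin hbd hzwin.1 hzwin.2
      have hVr0 : 0 ≤ Vr z := ENNReal.toReal_nonneg
      refine ⟨z, ⟨by linarith [(us 0).1, hzwin.1], by linarith [(us 0).2, hzwin.2]⟩,
        hzwin.2, by push_cast; linarith, ?_⟩
      simp only [Finset.sum_range_zero, Nat.cast_zero]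
      linarith
    | succ k ih =>
      intro hk1
      obtain ⟨z, ⟨hza, hzb⟩, hzu, hside, hmain⟩ := ih (by omega)
      have hkm : (k:ℝ) ≤ (m:ℝ) := by exact_mod_cast (by omega : k ≤ m)
      have hp1 : (k:ℝ) * ε' ≤ (m:ℝ) * ε' := by nlinarith
      have hp2 : (0:ℝ) ≤ (m:ℝ) * ε' := by positivity
      have hp0 : (0:ℝ) ≤ (k:ℝ) * ε' := by positivity
      have huk : u k ≤ u (k + 1) := hu (Nat.le_succ k)
      have hsum : (∑ i ∈ Finset.range (k+1), |swin f r (u (i+1)) - swin f r (u i)|)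
          = (∑ i ∈ Finset.range k, |swin f r (u (i+1)) - swin f r (u i)|)
            + |swin f r (u (k+1)) - swin f r (u k)| := Finset.sum_range_succ _ k
      rcases le_or_gt (swin f r (u (k+1))) (swin f r (u k)) with hdn | hup
      · -- down step
        have habs : |swin f r (u (k+1)) - swin f r (u k)|
            = swin f r (u k) - swin f r (u (k+1)) := by
          rw [abs_sub_comm]; exact abs_of_nonneg (by linarith)
        rcases le_or_gt z (u (k+1)) with hz1 | hz2
        · -- new anchor at u (k+1)
          have hmem : a - r ≤ u (k+1) ∧ u (k+1) ≤ b + r :=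
            ⟨by linarith [(us (k+1)).1], by linarith [(us (k+1)).2]⟩
          have hfz' : f (u (k+1)) ≤ swin f r (u (k+1)) := self_le_swin hbd hr _
          have hpay := hVrpay2 z (u (k+1)) hza hz1 hmem.2
          refine ⟨u (k+1), hmem, by linarith, by push_cast; linarith, ?_⟩
          rw [hsum, habs]
          push_cast
          linarith
        · -- keep anchor
          have hfz : f z ≤ swin f r (u (k+1)) :=
            le_swin hbd (by linarith) (by linarith)
          refine ⟨z, ⟨hza, hzb⟩, by linarith, by push_cast; linarith, ?_⟩
          rw [hsum, habs]
          push_cast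
          linarith
      · -- up step
        have habs : |swin f r (u (k+1)) - swin f r (u k)|
            = swin f r (u (k+1)) - swin f r (u k) := abs_of_nonneg (by linarith)
        rcases le_or_gt (swin f r (u (k+1))) (swin f r (u k) + (2*(k:ℝ)+2) * ε') with hsm | hbig
        · -- small rise : keep anchor
          refine ⟨z, ⟨hza, hzb⟩, by linarith, by push_cast; linarith, ?_⟩
          rw [hsum, habs]
          push_cast
          linarith
        · -- big rise : move anchor to near-maximizer
          obtain ⟨w, ⟨z', hz'win, rfl⟩, hw⟩ :=
            exists_lt_of_lt_csSup (win_nonempty hr (u (k+1)))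
              (show swin f r (u (k+1)) - ε' < swin f r (u (k+1)) by linarith)
          have hmem : a - r ≤ z' ∧ z' ≤ b + r :=
            ⟨by linarith [(us (k+1)).1, hz'win.1], by linarith [(us (k+1)).2, hz'win.2]⟩
          have hfz'le : f z' ≤ swin f r (u (k+1)) := le_swin hbd hz'win.1 hz'win.2
          have hzz' : z < z' := by
            by_contra hcon
            push_neg at hcon
            have hfz'small : f z' ≤ swin f r (u k) + (2*(k:ℝ)+1) * ε' := by
              rcases eq_or_lt_of_le hcon with heq | hlt
              · rw [heq]; exact hside
              · have h6 : f z' ≤ swin f r (u k) :=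
                  le_swin hbd (by linarith [hz'win.1]) (by linarith)
                linarith
            linarith
          have hpay := hVrpay z z' hza hzz'.le hmem.2
          refine ⟨z', hmem, hz'win.2, by push_cast; linarith, ?_⟩
          rw [hsum, habs]
          push_cast
          linarith
  obtain ⟨z, ⟨hza, hzb⟩, hzu, hside, hmain⟩ := key m le_rfl
  have hVz : Vr z ≤ V := hVrle z hza hzb
  have hm2 : ((m:ℝ) * (4 * (m:ℝ) + 10) + 1) * ε' + (2*(m:ℝ)+1) * ε'
      = (4 * (m:ℝ)^2 + 12 * m + 2) * ε' := by ring
  have heps : (4 * (m:ℝ)^2 + 12 * m + 2) * ε' = ε := by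
    rw [hε'def]; field_simp
  linarith

lemma evar_avg_le {g : ℝ → ℝ} {C d : ℝ} (hg : Measurable g) (hbd : ∀ x, |g x| ≤ C) (hd : 0 < d)
    {a b : ℝ} :
    eVariationOn (avg g d) (Icc a b) ≤ eVariationOn g (Icc (a - d) (b + d)) := by
  by_cases hfin : eVariationOn g (Icc (a - d) (b + d)) = ⊤
  · rw [hfin]; exact le_top
  refine iSup_le ?_
  rintro ⟨m, ⟨u, hu, us⟩⟩
  dsimp only
  rw [sum_edist_eq (avg g d) u m, ENNReal.ofReal_le_iff_le_toReal hfin]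
  set V : ℝ := (eVariationOn g (Icc (a - d) (b + d))).toReal with hV
  have hshift : ∀ c : ℝ, (∫ y in (c - d)..(c + d), g y) = ∫ y in (-d)..d, g (c + y) := by
    intro c
    rw [intervalIntegral.integral_comp_add_left g c]
    congr 1 <;> ring
  have hint : ∀ c : ℝ, IntervalIntegrable (fun y => g (c + y)) volume (-d) d := fun c =>
    intInt (hg.comp (measurable_const_add c)) (fun x => hbd _) _ _
  have hterm : ∀ i : ℕ, |avg g d (u (i+1)) - avg g d (u i)|
      ≤ (2*d)⁻¹ * ∫ y in (-d)..d, |g (u (i+1) + y) - g (u i + y)| := by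
    intro i
    unfold avg
    rw [hshift, hshift, ← mul_sub, abs_mul,
      abs_of_nonneg (by positivity : (0:ℝ) ≤ (2*d)⁻¹),
      ← intervalIntegral.integral_sub (hint _) (hint _)]
    apply mul_le_mul_of_nonneg_left _ (by positivity)
    exact intervalIntegral.abs_integral_le_integral_abs (by linarith)
  have hintabs : ∀ i : ℕ, IntervalIntegrable
      (fun y => |g (u (i+1) + y) - g (u i + y)|) volume (-d) d :=
    fun i => ((hint (u (i+1))).sub (hint (u i))).abs
  have hsum : (∑ i ∈ Finset.range m, |avg g d (u (i+1)) - avg g d (u i)|)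
      ≤ (2*d)⁻¹ * ∫ y in (-d)..d,
          (∑ i ∈ Finset.range m, |g (u (i+1) + y) - g (u i + y)|) := by
    rw [intervalIntegral.integral_finset_sum (fun i _ => hintabs i), Finset.mul_sum]
    exact Finset.sum_le_sum fun i _ => hterm i
  have hpt : ∀ y ∈ Icc (-d) d,
      (∑ i ∈ Finset.range m, |g (u (i+1) + y) - g (u i + y)|) ≤ V := by
    intro y hy
    refine sum_abs_le_evar hfin (u := fun i => u i + y) (hu.add_const y) (fun i => ?_) m
    simp only [mem_Icc]
    constructor <;> linarith [(us i).1, (us i).2, hy.1, hy.2]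
  have hint2 : IntervalIntegrable
      (fun y => ∑ i ∈ Finset.range m, |g (u (i+1) + y) - g (u i + y)|) volume (-d) d := by
    have h7 := IntervalIntegrable.sum (μ := volume) (a := -d) (b := d) (Finset.range m)
      (f := fun i y => |g (u (i+1) + y) - g (u i + y)|) (fun i _ => hintabs i)
    have h8 : (fun y => ∑ i ∈ Finset.range m, |g (u (i+1) + y) - g (u i + y)|)
        = ∑ i ∈ Finset.range m, fun y => |g (u (i+1) + y) - g (u i + y)| := by
      funext y
      simp [Finset.sum_apply]
    rw [h8]
    exact h7
  have hVnn : 0 ≤ V := ENNReal.toReal_nonneg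
  have hfinal : (∫ y in (-d)..d, (∑ i ∈ Finset.range m, |g (u (i+1) + y) - g (u i + y)|))
      ≤ ∫ _ in (-d)..d, V :=
    intervalIntegral.integral_mono_on (by linarith) hint2 intervalIntegrable_const hpt
  have hconst : (∫ _ in (-d)..d, V) = 2 * d * V := by
    rw [intervalIntegral.integral_const, smul_eq_mul]
    ring
  have h2d : (2*d)⁻¹ * (2 * d * V) = V := by field_simp
  calc (∑ i ∈ Finset.range m, |avg g d (u (i+1)) - avg g d (u i)|)
      ≤ (2*d)⁻¹ * ∫ y in (-d)..d,
          (∑ i ∈ Finset.range m, |g (u (i+1) + y) - g (u i + y)|) := hsum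
    _ ≤ (2*d)⁻¹ * (2 * d * V) := by
        apply mul_le_mul_of_nonneg_left _ (by positivity)
        rw [← hconst]; exact hfinal
    _ = V := h2d

lemma avg_anti_of_shift {g : ℝ → ℝ} {C d : ℝ} (hg : Measurable g) (hbd : ∀ x, |g x| ≤ C)
    (hd : 0 < d) {x₁ x₂ : ℝ} (h12 : x₁ ≤ x₂)
    (h : ∀ y ∈ Icc (x₁ - d) (x₁ + d), g (y + (x₂ - x₁)) ≤ g y) :
    avg g d x₂ ≤ avg g d x₁ := by
  unfold avg
  have h2 : (∫ y in (x₂ - d)..(x₂ + d), g y) = ∫ y in (x₁ - d)..(x₁ + d), g (y + (x₂ - x₁)) := by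
    rw [intervalIntegral.integral_comp_add_right]; ring_nf
  rw [h2]
  have key : (∫ y in (x₁ - d)..(x₁ + d), g (y + (x₂ - x₁))) ≤
      ∫ y in (x₁ - d)..(x₁ + d), g y := by
    refine intervalIntegral.integral_mono_on (by linarith) ?_ (intInt hg hbd _ _) h
    exact (intInt (hg.comp (measurable_add_const _)) (fun x => hbd _) _ _ : _)
  exact mul_le_mul_of_nonneg_left key (by positivity)

lemma evar_translate {f : ℝ → ℝ} {L : ℝ} (hper : Function.Periodic f L) (a b : ℝ) :
    eVariationOn f (Icc a b) = eVariationOn f (Icc (a + L) (b + L)) := by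
  have hφ : MonotoneOn (fun x : ℝ => x + L) (Icc a b) := fun x _ y _ hxy => by simp; linarith
  have hcomp : f ∘ (fun x : ℝ => x + L) = f := funext fun x => hper x
  have h1 := eVariationOn.comp_eq_of_monotoneOn f (fun x : ℝ => x + L) hφ
  rw [hcomp] at h1
  rw [h1, Set.image_add_const_Icc]

lemma evar_reflect (f : ℝ → ℝ) (c x : ℝ) :
    eVariationOn (fun y => f (c - y)) (Icc 0 x) = eVariationOn f (Icc (c - x) c) := by
  have hφ : AntitoneOn (fun y : ℝ => c - y) (Icc 0 x) := fun y _ z _ hyz => by simp; linarith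
  have h1 := eVariationOn.comp_eq_of_antitoneOn f (fun y : ℝ => c - y) hφ
  have hcomp : f ∘ (fun y : ℝ => c - y) = fun y => f (c - y) := rfl
  rw [hcomp] at h1
  rw [h1, Set.image_const_sub_Icc]
  norm_num

lemma evar_small_right {f : ℝ → ℝ} {b : ℝ} (hb : 0 < b)
    (hfin : eVariationOn f (Icc 0 b) ≠ ⊤) (hc : ContinuousAt f 0)
    {ε : ℝ} (hε : 0 < ε) :
    ∃ x > 0, eVariationOn f (Icc 0 x) ≤ ENNReal.ofReal ε := by
  obtain ⟨ρ, hρ, hball⟩ := Metric.continuousAt_iff.1 hc (ε/8) (by positivity)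
  set x₀ : ℝ := min (ρ/2) b with hx₀def
  have hx₀pos : 0 < x₀ := lt_min (by positivity) hb
  have hx₀b : x₀ ≤ b := min_le_right _ _
  have hx₀ρ : x₀ < ρ := (min_le_left _ _).trans_lt (by linarith)
  have hx₀fin : eVariationOn f (Icc 0 x₀) ≠ ⊤ :=
    evar_fin_sub hfin (Icc_subset_Icc le_rfl hx₀b)
  have hsmall : ∀ y : ℝ, y ∈ Icc 0 x₀ → |f y - f 0| ≤ ε/8 := by
    intro y hy
    have : dist y 0 < ρ := by
      rw [Real.dist_eq, sub_zero, abs_of_nonneg hy.1]; linarith [hy.2]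
    have := hball this
    rw [Real.dist_eq] at this
    linarith
  set S : Set ℝ := (fun x => (eVariationOn f (Icc 0 x)).toReal) '' Ioc 0 b with hSdef
  have hSne : S.Nonempty := ⟨_, mem_image_of_mem _ (show b ∈ Ioc 0 b from ⟨hb, le_rfl⟩)⟩
  have hSbdd : BddBelow S := ⟨0, by rintro v ⟨x, -, rfl⟩; exact ENNReal.toReal_nonneg⟩
  set c : ℝ := sInf S with hcdef
  have hcle : ∀ x : ℝ, x ∈ Ioc 0 b → c ≤ (eVariationOn f (Icc 0 x)).toReal :=
    fun x hx => csInf_le hSbdd (mem_image_of_mem _ hx)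
  set V₀ : ℝ := (eVariationOn f (Icc 0 x₀)).toReal with hV₀def
  have hcV₀ : c ≤ V₀ := hcle x₀ ⟨hx₀pos, hx₀b⟩
  -- every partition sum on [0, x₀] is at most ε/4 + (V₀ - c)
  have hQ : ∀ k : ℕ, ∀ u : ℕ → ℝ, Monotone u → (∀ i, u i ∈ Icc 0 x₀) →
      (∑ i ∈ Finset.range k, |f (u (i+1)) - f (u i)|) ≤ ε/4 + (V₀ - c) := by
    intro k
    induction k with
    | zero => intro u _ _; simp; linarith
    | succ k ih =>
      intro u hu us
      have hsum : (∑ i ∈ Finset.range (k+1), |f (u (i+1)) - f (u i)|)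
          = (∑ i ∈ Finset.range k, |f (u (i+2)) - f (u (i+1))|) + |f (u 1) - f (u 0)| := by
        rw [Finset.sum_range_succ' (fun i => |f (u (i+1)) - f (u i)|) k]
      rcases le_or_gt (u 1) 0 with h0 | h0
      · have hu1 : u 1 = 0 := le_antisymm h0 (us 1).1
        have hu0 : u 0 = 0 := le_antisymm (hu1 ▸ hu (Nat.zero_le 1)) (us 0).1
        have htail := ih (fun i => u (i+1)) (fun i j hij => hu (by omega)) (fun i => us (i+1))
        rw [hsum, hu1, hu0]
        simpa using htail
      · -- u 1 > 0
        have hufin : eVariationOn f (Icc (u 1) x₀) ≠ ⊤ :=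
          evar_fin_sub hfin (Icc_subset_Icc (us 1).1 hx₀b)
        have htail : (∑ i ∈ Finset.range k, |f (u (i+2)) - f (u (i+1))|)
            ≤ (eVariationOn f (Icc (u 1) x₀)).toReal := by
          refine sum_abs_le_evar hufin (u := fun i => u (i+1)) ?_ (fun i => ?_) k
          · exact fun i j hij => hu (by omega)
          · exact ⟨hu (by omega : 1 ≤ i + 1), (us (i+1)).2⟩
        have hadd : eVariationOn f (Icc 0 (u 1)) + eVariationOn f (Icc (u 1) x₀)
            = eVariationOn f (Icc 0 x₀) := evar_Icc_add f (us 1).1 (us 1).2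
        have h1fin : eVariationOn f (Icc 0 (u 1)) ≠ ⊤ :=
          evar_fin_sub hfin (Icc_subset_Icc le_rfl ((us 1).2.trans hx₀b))
        have haddR : (eVariationOn f (Icc 0 (u 1))).toReal
            + (eVariationOn f (Icc (u 1) x₀)).toReal = V₀ := by
          rw [hV₀def, ← hadd, ENNReal.toReal_add h1fin hufin]
        have hc1 : c ≤ (eVariationOn f (Icc 0 (u 1))).toReal :=
          hcle (u 1) ⟨h0, (us 1).2.trans hx₀b⟩
        have hterm0 : |f (u 1) - f (u 0)| ≤ ε/4 := by
          have h1 := hsmall (u 1) (us 1)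
          have h2 := hsmall (u 0) (us 0)
          have : |f (u 1) - f (u 0)| ≤ |f (u 1) - f 0| + |f (u 0) - f 0| := by
            rw [abs_sub_comm (f (u 0)) (f 0)]
            exact abs_sub_le _ _ _
          linarith
        rw [hsum]
        linarith
  -- conclude that c < ε
  have hcε : c < ε := by
    rcases eq_or_ne (eVariationOn f (Icc 0 x₀)) 0 with h0 | h0
    · have : V₀ = 0 := by rw [hV₀def, h0]; rfl
      linarith
    · have hV₀pos : 0 < V₀ := ENNReal.toReal_pos h0 hx₀fin
      rcases le_or_gt (V₀ - ε/4) 0 with hneg | hpos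
      · linarith
      · have hlt : ENNReal.ofReal (V₀ - ε/4) < eVariationOn f (Icc 0 x₀) := by
          conv_rhs => rw [← ENNReal.ofReal_toReal hx₀fin]
          rw [ENNReal.ofReal_lt_ofReal_iff (by linarith : (0:ℝ) < V₀)]
          linarith
        rw [eVariationOn] at hlt
        obtain ⟨⟨k, ⟨u, hu, us⟩⟩, hgt⟩ := lt_iSup_iff.mp hlt
        rw [sum_edist_eq f u k] at hgt
        have hgt' : V₀ - ε/4 < ∑ i ∈ Finset.range k, |f (u (i+1)) - f (u i)| := by
          have := (ENNReal.ofReal_lt_ofReal_iff_of_nonneg (by linarith)).1 hgt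
          exact this
        have := hQ k u hu us
        linarith
  obtain ⟨v, ⟨x, hx, rfl⟩, hvlt⟩ := exists_lt_of_csInf_lt hSne hcε
  refine ⟨x, hx.1, ?_⟩
  have hxfin : eVariationOn f (Icc 0 x) ≠ ⊤ :=
    evar_fin_sub hfin (Icc_subset_Icc le_rfl hx.2)
  rw [← ENNReal.ofReal_toReal hxfin]
  exact ENNReal.ofReal_le_ofReal hvlt.le

noncomputable def wdt (n : ℕ) : ℝ := (3:ℝ)⁻¹ ^ n

lemma wdt_pos (n : ℕ) : 0 < wdt n := pow_pos (by norm_num) n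

lemma wdt_three (n : ℕ) : 3 * wdt (n+1) = wdt n := by
  unfold wdt
  rw [pow_succ]
  ring

lemma wdt_le_inv {n : ℕ} (hn : 1 ≤ n) : wdt n ≤ 1 / (n:ℝ) := by
  unfold wdt
  rw [inv_pow, one_div]
  apply inv_anti₀ (by exact_mod_cast hn)
  calc (n:ℝ) ≤ 2^n := by exact_mod_cast Nat.le_of_lt (Nat.lt_two_pow_self (n := n))
    _ ≤ 3^n := by
        apply pow_le_pow_left₀ (by norm_num) (by norm_num)

lemma wdt_tendsto : Tendsto (fun n : ℕ => 3 * wdt n) atTop (nhds 0) := by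
  have h1 := tendsto_pow_atTop_nhds_zero_of_lt_one
    (by norm_num : (0:ℝ) ≤ 3⁻¹) (by norm_num : (3:ℝ)⁻¹ < 1)
  have := h1.const_mul (3:ℝ)
  simpa [wdt] using this

end AFA


open AFA in
set_option maxHeartbeats 1000000 in
/-- Lemma 3.2 (Aprox1), upper half: a periodic, bounded, piecewise monotone BV
function which is continuous at `0` and at every local minimum point not lying in
an interval of constancy admits a decreasing approximation from above by
continuous periodic functions, preserving local maxima, monotonicity of pieces,
and with asymptotic control of the total variation. -/
theorem approximation_from_above
    (L : ℝ) (hL : 0 < L) (K : ℕ) (hK : 0 < K)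
    (t : Fin (K + 1) → ℝ) (ht : StrictMono t)
    (ht0 : t 0 = 0) (htK : t (Fin.last K) = L)
    (f : ℝ → ℝ)
    (hper : Function.Periodic f L)
    (hbd : ∃ C : ℝ, ∀ x : ℝ, |f x| ≤ C)
    (hBV : eVariationOn f (Set.Icc 0 L) ≠ ⊤)
    (hmono : ∀ i : Fin K,
      MonotoneOn f (Set.Icc (t i.castSucc) (t i.succ)) ∨
      AntitoneOn f (Set.Icc (t i.castSucc) (t i.succ)))
    (hcont0 : ContinuousAt f 0)
    (hcontmin : ∀ x : ℝ, IsLocalMin f x →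
      (¬ ∃ u v : ℝ, u < x ∧ x < v ∧ ∀ y ∈ Set.Ioo u v, f y = f x) →
      ContinuousAt f x) :
    ∃ h : ℕ → ℝ → ℝ,
      (∀ n : ℕ, 1 ≤ n → Continuous (h n) ∧ Function.Periodic (h n) L) ∧
      -- (1) monotone approximation from above
      (∀ n : ℕ, 1 ≤ n → ∀ x : ℝ, h (n + 1) x ≤ h n x ∧ f x ≤ h n x) ∧
      -- (2) convergence at continuity points
      (∀ x : ℝ, ContinuousAt f x →
        Tendsto (fun n : ℕ => h n x) atTop (nhds (f x))) ∧
      -- (3) local maxima are preserved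
      (∀ x₀ : ℝ, ContinuousAt f x₀ → IsLocalMax f x₀ →
        ∀ᶠ n : ℕ in atTop, h n x₀ = f x₀) ∧
      -- (4) monotonicity is preserved in the interior of monotone intervals
      (∀ s u : ℝ, ∀ n : ℕ, 1 ≤ n → s + 3 / (n : ℝ) ≤ u - 3 / (n : ℝ) →
        (MonotoneOn f (Set.Ioo s u) →
          MonotoneOn (h n) (Set.Icc (s + 3 / (n : ℝ)) (u - 3 / (n : ℝ)))) ∧
        (AntitoneOn f (Set.Ioo s u) →
          AntitoneOn (h n) (Set.Icc (s + 3 / (n : ℝ)) (u - 3 / (n : ℝ))))) ∧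
      -- (5) asymptotic control of the total variation
      Filter.limsup (fun n : ℕ => eVariationOn (h n) (Set.Icc 0 L)) atTop ≤
        eVariationOn f (Set.Icc 0 L) := by
  obtain ⟨C, hC⟩ := hbd
  have h2dpos : ∀ n : ℕ, 0 < 2 * wdt n := fun n => by linarith [wdt_pos n]
  have hMbd : ∀ (n : ℕ) (y : ℝ), |swin f (2 * wdt n) y| ≤ C :=
    fun n y => abs_swin_le hC (h2dpos n) y
  have hMmeas : ∀ n : ℕ, Measurable (swin f (2 * wdt n)) :=
    fun n => swin_measurable hC (h2dpos n)
  have hMper : ∀ n : ℕ, Function.Periodic (swin f (2 * wdt n)) L :=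
    fun n => swin_periodic hper _
  -- lower bound : f x ≤ h n x
  have hfh : ∀ (n : ℕ) (x : ℝ), f x ≤ avg (swin f (2 * wdt n)) (wdt n) x := by
    intro n x
    apply le_avg (hMmeas n) (hMbd n) (wdt_pos n)
    intro y hy
    exact le_swin hC (by simp only [mem_Icc] at hy; linarith [wdt_pos n])
      (by simp only [mem_Icc] at hy; linarith [wdt_pos n])
  -- upper bound via the triple window
  have hupper : ∀ (n : ℕ) (x : ℝ), avg (swin f (2 * wdt n)) (wdt n) x
      ≤ sSup (f '' Ioo (x - 3 * wdt n) (x + 3 * wdt n)) := by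
    intro n x
    apply avg_le (hMmeas n) (hMbd n) (wdt_pos n)
    intro y hy
    simp only [mem_Icc] at hy
    apply swin_le (h2dpos n)
    intro z hz1 hz2
    apply le_csSup (win_bdd hC _)
    exact ⟨z, ⟨by linarith [hy.1], by linarith [hy.2]⟩, rfl⟩
  -- monotone decreasing in n
  have hdec : ∀ (n : ℕ) (x : ℝ), avg (swin f (2 * wdt (n+1))) (wdt (n+1)) x
      ≤ avg (swin f (2 * wdt n)) (wdt n) x := by
    intro n x
    have h3 := wdt_three n
    have hmid : avg (swin f (2 * wdt (n+1))) (wdt (n+1)) x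
        ≤ sSup (f '' Ioo (x - wdt n) (x + wdt n)) := by
      apply avg_le (hMmeas (n+1)) (hMbd (n+1)) (wdt_pos (n+1))
      intro y hy
      simp only [mem_Icc] at hy
      apply swin_le (h2dpos (n+1))
      intro z hz1 hz2
      apply le_csSup (win_bdd hC _)
      exact ⟨z, ⟨by linarith [hy.1], by linarith [hy.2]⟩, rfl⟩
    refine hmid.trans ?_
    apply le_avg (hMmeas n) (hMbd n) (wdt_pos n)
    intro y hy
    simp only [mem_Icc] at hy
    have hsub : Ioo (x - wdt n) (x + wdt n) ⊆ Ioo (y - 2 * wdt n) (y + 2 * wdt n) :=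
      Ioo_subset_Ioo (by linarith [hy.1]) (by linarith [hy.2])
    exact csSup_le_csSup (win_bdd hC _) (win_nonempty (wdt_pos n) x) (image_mono (f := f) hsub)
  refine ⟨fun n => avg (swin f (2 * wdt n)) (wdt n), ?_, ?_, ?_, ?_, ?_, ?_⟩
  · -- continuity and periodicity
    intro n _
    exact ⟨avg_continuous (hMmeas n) (hMbd n) (wdt_pos n), avg_periodic (hMper n) _⟩
  · -- (1)
    intro n _ x
    exact ⟨hdec n x, hfh n x⟩
  · -- (2)
    intro x hcx
    rw [Metric.tendsto_atTop]
    intro ε hε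
    obtain ⟨ρ, hρpos, hball⟩ := Metric.continuousAt_iff.1 hcx (ε/2) (by positivity)
    obtain ⟨N, hN⟩ := eventually_atTop.1 (wdt_tendsto.eventually_lt_const hρpos)
    refine ⟨N, fun n hn => ?_⟩
    have hup : avg (swin f (2 * wdt n)) (wdt n) x ≤ f x + ε/2 := by
      refine (hupper n x).trans ?_
      apply csSup_le ((win_nonempty (by linarith [wdt_pos n] : 0 < 3 * wdt n) x).mono
        (image_mono (f := f) (by rfl)))
      rintro v ⟨z, hz, rfl⟩
      have hdist : dist z x < ρ := by
        rw [Real.dist_eq]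
        have := hN n hn
        exact lt_of_lt_of_le (abs_lt.2 ⟨by linarith [hz.1], by linarith [hz.2]⟩) this.le
      have := hball hdist
      rw [Real.dist_eq] at this
      have := abs_lt.1 this
      linarith [this.2]
    have hlow := hfh n x
    rw [Real.dist_eq, abs_of_nonneg (by linarith)]
    linarith
  · -- (3)
    intro x₀ _ hm
    obtain ⟨ρ, hρpos, hball⟩ := Metric.eventually_nhds_iff.1 hm
    filter_upwards [wdt_tendsto.eventually_lt_const hρpos] with n hn
    refine le_antisymm ?_ (hfh n x₀)
    refine (hupper n x₀).trans ?_
    apply csSup_le ((win_nonempty (by linarith [wdt_pos n] : 0 < 3 * wdt n) x₀).mono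
      (image_mono (f := f) (by rfl)))
    rintro v ⟨z, hz, rfl⟩
    apply hball
    rw [Real.dist_eq]
    exact lt_of_lt_of_le (abs_lt.2 ⟨by linarith [hz.1], by linarith [hz.2]⟩) hn.le
  · -- (4)
    intro s u n hn hsu
    have h3n : 3 * wdt n ≤ 3 / (n:ℝ) := by
      have := wdt_le_inv hn
      rw [div_eq_mul_inv, ← one_div]
      linarith
    constructor
    · intro hmf x₁ hx₁ x₂ hx₂ hle
      simp only [mem_Icc] at hx₁ hx₂
      apply avg_mono_of_shift (hMmeas n) (hMbd n) (wdt_pos n) hle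
      intro y hy
      simp only [mem_Icc] at hy
      apply swin_le (h2dpos n)
      intro z hz1 hz2
      have hz_mem : z ∈ Ioo s u :=
        ⟨by linarith [hx₁.1, hy.1], by linarith [hx₁.2, hy.2]⟩
      have hz2_mem : z + (x₂ - x₁) ∈ Ioo s u :=
        ⟨by linarith [hx₂.1, hy.1], by linarith [hx₂.2, hy.2]⟩
      calc f z ≤ f (z + (x₂ - x₁)) := hmf hz_mem hz2_mem (by linarith)
        _ ≤ swin f (2 * wdt n) (y + (x₂ - x₁)) := le_swin hC (by linarith) (by linarith)
    · intro hmf x₁ hx₁ x₂ hx₂ hle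
      simp only [mem_Icc] at hx₁ hx₂
      apply avg_anti_of_shift (hMmeas n) (hMbd n) (wdt_pos n) hle
      intro y hy
      simp only [mem_Icc] at hy
      apply swin_le (h2dpos n)
      intro z hz1 hz2
      have hz_mem : z - (x₂ - x₁) ∈ Ioo s u :=
        ⟨by linarith [hx₁.1, hy.1], by linarith [hx₁.2, hy.2]⟩
      have hz2_mem : z ∈ Ioo s u :=
        ⟨by linarith [hx₂.1, hy.1], by linarith [hx₂.2, hy.2]⟩
      calc f z ≤ f (z - (x₂ - x₁)) := hmf hz_mem hz2_mem (by linarith)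
        _ ≤ swin f (2 * wdt n) y := le_swin hC (by linarith) (by linarith)
  · -- (5)
    apply ENNReal.le_of_forall_pos_le_add
    intro eta heta _
    have hepos : (0:ℝ) < (eta:ℝ) := by exact_mod_cast heta
    have hcontL : ContinuousAt f L := by
      have hfeq : (f ∘ fun x : ℝ => x - L) = f := funext fun x => by
        have h1 := hper (x - L)
        simp only [Function.comp_apply]
        simpa using h1.symm
      have hmap : ContinuousAt (fun x : ℝ => x - L) L :=
        (continuous_id.sub continuous_const).continuousAt
      have h0 : ContinuousAt f ((fun x : ℝ => x - L) L) := by simpa using hcont0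
      have h2 : ContinuousAt (f ∘ fun x : ℝ => x - L) L := ContinuousAt.comp h0 hmap
      rwa [hfeq] at h2
    have hcontRefl : ContinuousAt (fun y : ℝ => f (L - y)) 0 := by
      have hmap : ContinuousAt (fun y : ℝ => L - y) 0 :=
        (continuous_const.sub continuous_id).continuousAt
      have h0 : ContinuousAt f ((fun y : ℝ => L - y) 0) := by simpa using hcontL
      exact ContinuousAt.comp h0 hmap
    have hreflfin : eVariationOn (fun y : ℝ => f (L - y)) (Icc 0 L) ≠ ⊤ := by
      have h1 := evar_reflect f L L
      rw [show L - L = 0 by ring] at h1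
      rw [h1]; exact hBV
    obtain ⟨x₁, hx₁pos, hx₁⟩ := evar_small_right hL hBV hcont0
      (show (0:ℝ) < (eta:ℝ)/2 by positivity)
    obtain ⟨x₂, hx₂pos, hx₂⟩ := evar_small_right hL hreflfin hcontRefl
      (show (0:ℝ) < (eta:ℝ)/2 by positivity)
    have hx₂' : eVariationOn f (Icc (L - x₂) L) ≤ ENNReal.ofReal ((eta:ℝ)/2) := by
      rw [← evar_reflect f L x₂]; exact hx₂
    refine limsup_le_of_le (by isBoundedDefault) ?_
    filter_upwards [wdt_tendsto.eventually_lt_const hx₁pos,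
      wdt_tendsto.eventually_lt_const hx₂pos] with n hn1 hn2
    have hw := wdt_pos n
    have step1 : eVariationOn (avg (swin f (2 * wdt n)) (wdt n)) (Icc 0 L)
        ≤ eVariationOn (swin f (2 * wdt n)) (Icc (0 - wdt n) (L + wdt n)) :=
      evar_avg_le (hMmeas n) (hMbd n) (wdt_pos n)
    have step2 : eVariationOn (swin f (2 * wdt n)) (Icc (0 - wdt n) (L + wdt n))
        ≤ eVariationOn f (Icc (0 - wdt n - 2 * wdt n) (L + wdt n + 2 * wdt n)) :=
      evar_swin_le hC (h2dpos n)
    have heq : Icc (0 - wdt n - 2 * wdt n) (L + wdt n + 2 * wdt n)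
        = Icc (-(3 * wdt n)) (L + 3 * wdt n) := by
      congr 1 <;> ring
    rw [heq] at step2
    have e1 : eVariationOn f (Icc (-(3 * wdt n)) (L + 3 * wdt n))
        = eVariationOn f (Icc (-(3 * wdt n)) 0) + eVariationOn f (Icc 0 (L + 3 * wdt n)) :=
      (evar_Icc_add f (by linarith) (by linarith)).symm
    have e2 : eVariationOn f (Icc 0 (L + 3 * wdt n))
        = eVariationOn f (Icc 0 L) + eVariationOn f (Icc L (L + 3 * wdt n)) :=
      (evar_Icc_add f (by linarith) (by linarith)).symm
    have b1 : eVariationOn f (Icc (-(3 * wdt n)) 0) ≤ ENNReal.ofReal ((eta:ℝ)/2) := by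
      have htr := evar_translate hper (-(3 * wdt n)) 0
      rw [show -(3 * wdt n) + L = L - 3 * wdt n by ring, show (0:ℝ) + L = L by ring] at htr
      rw [htr]
      refine le_trans (eVariationOn.mono f ?_) hx₂'
      exact Icc_subset_Icc (by linarith) le_rfl
    have b2 : eVariationOn f (Icc L (L + 3 * wdt n)) ≤ ENNReal.ofReal ((eta:ℝ)/2) := by
      have htr := evar_translate hper 0 (3 * wdt n)
      rw [show (0:ℝ) + L = L by ring, show 3 * wdt n + L = L + 3 * wdt n by ring] at htr
      rw [← htr]
      refine le_trans (eVariationOn.mono f ?_) hx₁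
      exact Icc_subset_Icc le_rfl (by linarith)
    have hhalf : ENNReal.ofReal ((eta:ℝ)/2) + ENNReal.ofReal ((eta:ℝ)/2) = (eta : ENNReal) := by
      rw [← ENNReal.ofReal_add (by positivity) (by positivity)]
      rw [show (eta:ℝ)/2 + (eta:ℝ)/2 = (eta:ℝ) by ring]
      exact ENNReal.ofReal_coe_nnreal
    calc eVariationOn (avg (swin f (2 * wdt n)) (wdt n)) (Icc 0 L)
        ≤ eVariationOn f (Icc (-(3 * wdt n)) (L + 3 * wdt n)) := step1.trans step2
      _ = eVariationOn f (Icc (-(3 * wdt n)) 0) + (eVariationOn f (Icc 0 L)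
            + eVariationOn f (Icc L (L + 3 * wdt n))) := by rw [e1, e2]
      _ ≤ ENNReal.ofReal ((eta:ℝ)/2) + (eVariationOn f (Icc 0 L) + ENNReal.ofReal ((eta:ℝ)/2)) :=
          add_le_add b1 (add_le_add_right b2 _)
      _ = eVariationOn f (Icc 0 L) + (eta : ENNReal) := by
          rw [← hhalf]; ring
end

section
/- Let F⁺, F⁻ : ℝ → ℝ be bounded nondecreasing functions and set f = F⁺ − F⁻. Let φ : ℝ → ℝ be continuous, nonnegative, equal to 0 outside [−1, 1], and with ∫_ℝ φ = 1; for δ > 0 set φ_δ(t) = δ⁻¹ φ(t/δ). For each integer n ≥ 1 define ḡ_n(x) = ∫_ℝ F⁺(x − 1/n − y) φ_{1/n}(y) dy − ∫_ℝ F⁻(x + 1/n − y) φ_{1/n}(y) dy. Then: (i) each ḡ_n is continuous on ℝ; (ii) ḡ_n(x) ≤ f(x) for every x and n; (iii) ḡ_n(x) ≤ ḡ_{n+1}(x) for every x and n; (iv) if F⁺ and F⁻ are both continuous at a point x, then ḡ_n(x) → f(x) as n → ∞; (v) if F⁺ is constant on [x − 2/n, x] and F⁻ is constant on [x, x + 2/n],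 then ḡ_n(x) = f(x); (vi) for a < b: if F⁻ is constant on (a, b] and a ≤ b − 2/n, then ḡ_n is monotone nondecreasing on [a, b − 2/n]; if F⁺ is constant on [a, b) and a + 2/n ≤ b, then ḡ_n is monotone nonincreasing on [a + 2/n, b]. -/
open Filter Set MeasureTheory

section Aux


variable {φ : ℝ → ℝ}

lemma myphi_compact (hφc : Continuous φ)
    (hφsupp : ∀ t : ℝ, t ∉ Set.Icc (-1 : ℝ) 1 → φ t = 0) : HasCompactSupport φ := by
  apply HasCompactSupport.intro (isCompact_Icc (a := (-1:ℝ)) (b := 1))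
  intro t ht; exact hφsupp t ht

lemma myphi_integrable (hφc : Continuous φ)
    (hφsupp : ∀ t : ℝ, t ∉ Set.Icc (-1 : ℝ) 1 → φ t = 0) : Integrable φ :=
  hφc.integrable_of_hasCompactSupport (myphi_compact hφc hφsupp)

/-- substitution `y = s / n` -/
lemma my_subst (φ : ℝ → ℝ) (G : ℝ → ℝ) (c : ℝ) {n : ℝ} (hn : 0 < n) :
    (∫ y : ℝ, G (c - y) * (n * φ (n * y))) = ∫ s : ℝ, G (c - s / n) * φ s := by
  have h : ∀ y : ℝ, G (c - y) * (n * φ (n * y))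
      = n • ((fun s => G (c - s / n) * φ s) (n * y)) := by
    intro y
    have : (n * y) / n = y := by field_simp
    simp [this, smul_eq_mul]; ring
  calc (∫ y : ℝ, G (c - y) * (n * φ (n * y)))
      = ∫ y : ℝ, n • ((fun s => G (c - s / n) * φ s) (n * y)) := by
        exact integral_congr_ae (Filter.Eventually.of_forall h)
    _ = n • ∫ y : ℝ, (fun s => G (c - s / n) * φ s) (n * y) := integral_smul _ _
    _ = n • (|n⁻¹| • ∫ s : ℝ, G (c - s / n) * φ s) := by
        rw [MeasureTheory.Measure.integral_comp_mul_left (fun s => G (c - s / n) * φ s) n]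
    _ = ∫ s : ℝ, G (c - s / n) * φ s := by
        rw [smul_smul, abs_of_pos (inv_pos.mpr hn), mul_inv_cancel₀ hn.ne', one_smul]

lemma my_integrable (hφc : Continuous φ)
    (hφ0 : ∀ t : ℝ, 0 ≤ φ t)
    (hφsupp : ∀ t : ℝ, t ∉ Set.Icc (-1 : ℝ) 1 → φ t = 0)
    {G : ℝ → ℝ} (hG : Monotone G) {C : ℝ} (hC : ∀ x, |G x| ≤ C) (c d : ℝ) :
    Integrable (fun s : ℝ => G (c - s / d) * φ s) := by
  have hmeas : AEStronglyMeasurable (fun s : ℝ => G (c - s / d) * φ s) volume := by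
    apply AEStronglyMeasurable.mul _ hφc.aestronglyMeasurable
    exact (hG.measurable.comp (measurable_const.sub (measurable_id.div_const d))).aestronglyMeasurable
  apply Integrable.mono' ((myphi_integrable hφc hφsupp).const_mul C) hmeas
  filter_upwards with s
  rw [Real.norm_eq_abs, abs_mul, abs_of_nonneg (hφ0 s)]
  exact mul_le_mul_of_nonneg_right (hC _) (hφ0 s)

lemma my_mono (hφc : Continuous φ)
    (hφ0 : ∀ t : ℝ, 0 ≤ φ t)
    (hφsupp : ∀ t : ℝ, t ∉ Set.Icc (-1 : ℝ) 1 → φ t = 0)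
    {h₁ h₂ : ℝ → ℝ}
    (hint₁ : Integrable (fun s : ℝ => h₁ s * φ s))
    (hint₂ : Integrable (fun s : ℝ => h₂ s * φ s))
    (hle : ∀ s ∈ Set.Icc (-1 : ℝ) 1, h₁ s ≤ h₂ s) :
    (∫ s : ℝ, h₁ s * φ s) ≤ ∫ s : ℝ, h₂ s * φ s := by
  apply integral_mono hint₁ hint₂
  intro s
  by_cases hs : s ∈ Set.Icc (-1 : ℝ) 1
  · exact mul_le_mul_of_nonneg_right (hle s hs) (hφ0 s)
  · simp [hφsupp s hs]

lemma my_eval (hφc : Continuous φ)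
    (hφsupp : ∀ t : ℝ, t ∉ Set.Icc (-1 : ℝ) 1 → φ t = 0)
    (hφint : ∫ t : ℝ, φ t = 1)
    {h : ℝ → ℝ} {v : ℝ}
    (hae : ∀ᵐ s : ℝ, s ∈ Set.Icc (-1 : ℝ) 1 → h s = v) :
    (∫ s : ℝ, h s * φ s) = v := by
  have : (∫ s : ℝ, h s * φ s) = ∫ s : ℝ, v * φ s := by
    apply integral_congr_ae
    filter_upwards [hae] with s hs
    by_cases h' : s ∈ Set.Icc (-1 : ℝ) 1
    · rw [hs h']
    · simp [hφsupp s h']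
  rw [this, integral_const_mul, hφint, mul_one]

lemma ae_ne_real (a : ℝ) : ∀ᵐ s : ℝ, s ≠ a := by
  rw [MeasureTheory.ae_iff]
  convert Real.volume_singleton (a := a) using 2
  ext s; simp




lemma my_cont (hφc : Continuous φ)
    (hφsupp : ∀ t : ℝ, t ∉ Set.Icc (-1 : ℝ) 1 → φ t = 0)
    {G : ℝ → ℝ} (hG : Monotone G) {n : ℝ} (hn : 0 < n) :
    Continuous (fun c : ℝ => ∫ y : ℝ, G (c - y) * (n * φ (n * y))) := by
  set ψ : ℝ → ℝ := fun y => n * φ (n * y) with hψ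
  have hψc : Continuous ψ := continuous_const.mul (hφc.comp (continuous_const.mul continuous_id))
  have hψsupp : HasCompactSupport ψ := by
    apply HasCompactSupport.intro (isCompact_Icc (a := -(1/n)) (b := 1/n))
    intro y hy
    have hny : n * y ∉ Set.Icc (-1 : ℝ) 1 := by
      intro hmem
      apply hy
      constructor
      · rw [show -(1/n) = (-1)/n by ring, div_le_iff₀ hn]
        linarith [hmem.1, mul_comm y n]
      · rw [le_div_iff₀ hn]
        linarith [hmem.2, mul_comm y n]
    simp [hψ, hφsupp _ hny]
  have hGloc : LocallyIntegrable G volume := hG.locallyIntegrable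
  have key : (fun c : ℝ => ∫ y : ℝ, G (c - y) * ψ y)
      = convolution G ψ (ContinuousLinearMap.mul ℝ ℝ) volume := by
    ext c
    rw [convolution_def]
    calc (∫ y : ℝ, G (c - y) * ψ y)
        = ∫ y : ℝ, (fun t => G t * ψ (c - t)) (c - y) := by
          apply integral_congr_ae
          filter_upwards with y
          simp [sub_sub_cancel]
      _ = ∫ t : ℝ, (fun t => G t * ψ (c - t)) t := integral_sub_left_eq_self (fun t => G t * ψ (c - t)) volume c
      _ = ∫ t : ℝ, G t * ψ (c - t) := rfl
      _ = ∫ t : ℝ, (ContinuousLinearMap.mul ℝ ℝ) (G t) (ψ (c - t)) := by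
          simp [ContinuousLinearMap.mul_apply']
  rw [show (fun c : ℝ => ∫ y : ℝ, G (c - y) * (n * φ (n * y)))
      = (fun c : ℝ => ∫ y : ℝ, G (c - y) * ψ y) from rfl, key]
  exact hψsupp.continuous_convolution_right _ hGloc hψc

end Aux

/-- Properties of the shifted mollification `ḡ_n` from the proof of Lemma 3.2
(Aprox1): `f = F⁺ − F⁻` with `F⁺, F⁻` bounded nondecreasing,
`φ_δ(t) = δ⁻¹ φ(t/δ)` a mollifier, and
`ḡ_n(x) = (F⁺ ∗ φ_{1/n})(x − 1/n) − (F⁻ ∗ φ_{1/n})(x + 1/n)`. -/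
theorem shifted_mollification_from_below
    (Fp Fm : ℝ → ℝ)
    (hFp : Monotone Fp) (hFm : Monotone Fm)
    (hFpbd : ∃ C : ℝ, ∀ x : ℝ, |Fp x| ≤ C)
    (hFmbd : ∃ C : ℝ, ∀ x : ℝ, |Fm x| ≤ C)
    (f : ℝ → ℝ) (hf : ∀ x : ℝ, f x = Fp x - Fm x)
    (φ : ℝ → ℝ) (hφc : Continuous φ) (hφ0 : ∀ t : ℝ, 0 ≤ φ t)
    (hφsupp : ∀ t : ℝ, t ∉ Set.Icc (-1 : ℝ) 1 → φ t = 0)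
    (hφint : ∫ t : ℝ, φ t = 1)
    (gbar : ℕ → ℝ → ℝ)
    (hgbar : ∀ n : ℕ, 1 ≤ n → ∀ x : ℝ,
      gbar n x =
        (∫ y : ℝ, Fp (x - 1 / (n : ℝ) - y) * ((n : ℝ) * φ ((n : ℝ) * y))) -
        ∫ y : ℝ, Fm (x + 1 / (n : ℝ) - y) * ((n : ℝ) * φ ((n : ℝ) * y))) :
    -- (i) continuity
    (∀ n : ℕ, 1 ≤ n → Continuous (gbar n)) ∧
    -- (ii) approximation from below
    (∀ n : ℕ, 1 ≤ n → ∀ x : ℝ, gbar n x ≤ f x) ∧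
    -- (iii) monotonicity in n
    (∀ n : ℕ, 1 ≤ n → ∀ x : ℝ, gbar n x ≤ gbar (n + 1) x) ∧
    -- (iv) convergence at common continuity points
    (∀ x : ℝ, ContinuousAt Fp x → ContinuousAt Fm x →
      Tendsto (fun n : ℕ => gbar n x) atTop (nhds (f x))) ∧
    -- (v) exactness where the one-sided pieces are constant
    (∀ n : ℕ, 1 ≤ n → ∀ x : ℝ,
      (∀ y ∈ Set.Icc (x - 2 / (n : ℝ)) x, Fp y = Fp x) →
      (∀ y ∈ Set.Icc x (x + 2 / (n : ℝ)), Fm y = Fm x) →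
      gbar n x = f x) ∧
    -- (vi) one-sided monotonicity
    (∀ n : ℕ, 1 ≤ n → ∀ a b : ℝ, a < b →
      ((∀ y ∈ Set.Ioc a b, ∀ z ∈ Set.Ioc a b, Fm y = Fm z) →
        a ≤ b - 2 / (n : ℝ) →
        MonotoneOn (gbar n) (Set.Icc a (b - 2 / (n : ℝ)))) ∧
      ((∀ y ∈ Set.Ico a b, ∀ z ∈ Set.Ico a b, Fp y = Fp z) →
        a + 2 / (n : ℝ) ≤ b →
        AntitoneOn (gbar n) (Set.Icc (a + 2 / (n : ℝ)) b))) := by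
  obtain ⟨Cp, hCp⟩ := hFpbd
  obtain ⟨Cm, hCm⟩ := hFmbd
  have hφI : Integrable φ := myphi_integrable hφc hφsupp
  have hn0 : ∀ n : ℕ, 1 ≤ n → (0:ℝ) < (n:ℝ) := fun n hn => by exact_mod_cast hn
  -- substituted form of gbar
  have hg' : ∀ n : ℕ, 1 ≤ n → ∀ x : ℝ, gbar n x =
      (∫ s : ℝ, Fp (x - 1/(n:ℝ) - s/(n:ℝ)) * φ s) -
      ∫ s : ℝ, Fm (x + 1/(n:ℝ) - s/(n:ℝ)) * φ s := by
    intro n hn x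
    rw [hgbar n hn x, my_subst φ Fp _ (hn0 n hn), my_subst φ Fm _ (hn0 n hn)]
  -- integrability
  have intp : ∀ (c d : ℝ), Integrable (fun s : ℝ => Fp (c - s/d) * φ s) :=
    fun c d => my_integrable hφc hφ0 hφsupp hFp hCp c d
  have intm : ∀ (c d : ℝ), Integrable (fun s : ℝ => Fm (c - s/d) * φ s) :=
    fun c d => my_integrable hφc hφ0 hφsupp hFm hCm c d
  -- elementary arithmetic of the argument
  have harg : ∀ s ∈ Set.Icc (-1:ℝ) 1, ∀ n : ℕ, 1 ≤ n → ∀ c : ℝ,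
      c - 1/(n:ℝ) ≤ c - s/(n:ℝ) ∧ c - s/(n:ℝ) ≤ c + 1/(n:ℝ) := by
    intro s hs n hn c
    have hn' := hn0 n hn
    have h1 : 0 ≤ (1 - s)/(n:ℝ) := div_nonneg (by linarith [hs.2]) hn'.le
    have h2 : 0 ≤ (1 + s)/(n:ℝ) := div_nonneg (by linarith [hs.1]) hn'.le
    rw [sub_div] at h1; rw [add_div] at h2
    constructor <;> linarith
  -- upper bound for a mollified monotone function
  have hub : ∀ (G : ℝ → ℝ), Monotone G → ∀ (C : ℝ), (∀ x, |G x| ≤ C) →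
      ∀ n : ℕ, 1 ≤ n → ∀ c : ℝ,
      (∫ s : ℝ, G (c - s/(n:ℝ)) * φ s) ≤ G (c + 1/(n:ℝ)) := by
    intro G hG C hC n hn c
    have h := my_mono hφc hφ0 hφsupp
      (h₁ := fun s => G (c - s/(n:ℝ))) (h₂ := fun _ => G (c + 1/(n:ℝ)))
      (my_integrable hφc hφ0 hφsupp hG hC c (n:ℝ))
      (hφI.const_mul (G (c + 1/(n:ℝ))))
      (fun s hs => hG (harg s hs n hn c).2)
    calc (∫ s : ℝ, G (c - s/(n:ℝ)) * φ s) ≤ ∫ s : ℝ, G (c + 1/(n:ℝ)) * φ s := h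
      _ = G (c + 1/(n:ℝ)) := by rw [integral_const_mul, hφint, mul_one]
  -- lower bound
  have hlb : ∀ (G : ℝ → ℝ), Monotone G → ∀ (C : ℝ), (∀ x, |G x| ≤ C) →
      ∀ n : ℕ, 1 ≤ n → ∀ c : ℝ,
      G (c - 1/(n:ℝ)) ≤ ∫ s : ℝ, G (c - s/(n:ℝ)) * φ s := by
    intro G hG C hC n hn c
    have h := my_mono hφc hφ0 hφsupp
      (h₁ := fun _ => G (c - 1/(n:ℝ))) (h₂ := fun s => G (c - s/(n:ℝ)))
      (hφI.const_mul (G (c - 1/(n:ℝ))))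
      (my_integrable hφc hφ0 hφsupp hG hC c (n:ℝ))
      (fun s hs => hG (harg s hs n hn c).1)
    calc G (c - 1/(n:ℝ)) = ∫ s : ℝ, G (c - 1/(n:ℝ)) * φ s := by
          rw [integral_const_mul, hφint, mul_one]
      _ ≤ _ := h
  -- specialized bounds
  have hubp : ∀ n : ℕ, 1 ≤ n → ∀ x : ℝ,
      (∫ s : ℝ, Fp (x - 1/(n:ℝ) - s/(n:ℝ)) * φ s) ≤ Fp x := by
    intro n hn x
    have h := hub Fp hFp Cp hCp n hn (x - 1/(n:ℝ))
    rwa [show x - 1/(n:ℝ) + 1/(n:ℝ) = x by ring] at h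
  have hlbp : ∀ n : ℕ, 1 ≤ n → ∀ x : ℝ,
      Fp (x - 2/(n:ℝ)) ≤ ∫ s : ℝ, Fp (x - 1/(n:ℝ) - s/(n:ℝ)) * φ s := by
    intro n hn x
    have h := hlb Fp hFp Cp hCp n hn (x - 1/(n:ℝ))
    rwa [show x - 1/(n:ℝ) - 1/(n:ℝ) = x - 2/(n:ℝ) by ring] at h
  have hlbm : ∀ n : ℕ, 1 ≤ n → ∀ x : ℝ,
      Fm x ≤ ∫ s : ℝ, Fm (x + 1/(n:ℝ) - s/(n:ℝ)) * φ s := by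
    intro n hn x
    have h := hlb Fm hFm Cm hCm n hn (x + 1/(n:ℝ))
    rwa [show x + 1/(n:ℝ) - 1/(n:ℝ) = x by ring] at h
  have hubm : ∀ n : ℕ, 1 ≤ n → ∀ x : ℝ,
      (∫ s : ℝ, Fm (x + 1/(n:ℝ) - s/(n:ℝ)) * φ s) ≤ Fm (x + 2/(n:ℝ)) := by
    intro n hn x
    have h := hub Fm hFm Cm hCm n hn (x + 1/(n:ℝ))
    rwa [show x + 1/(n:ℝ) + 1/(n:ℝ) = x + 2/(n:ℝ) by ring] at h
  refine ⟨?_, ?_, ?_, ?_, ?_, ?_⟩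
  · -- (i) continuity
    intro n hn
    have hfun : gbar n = fun x =>
        (fun c => ∫ y : ℝ, Fp (c - y) * ((n:ℝ) * φ ((n:ℝ) * y))) (x - 1/(n:ℝ)) -
        (fun c => ∫ y : ℝ, Fm (c - y) * ((n:ℝ) * φ ((n:ℝ) * y))) (x + 1/(n:ℝ)) := by
      funext x; exact hgbar n hn x
    rw [hfun]
    apply Continuous.sub
    · exact (my_cont hφc hφsupp hFp (hn0 n hn)).comp (continuous_id.sub continuous_const)
    · exact (my_cont hφc hφsupp hFm (hn0 n hn)).comp (continuous_id.add continuous_const)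
  · -- (ii) below
    intro n hn x
    rw [hg' n hn x, hf x]
    exact sub_le_sub (hubp n hn x) (hlbm n hn x)
  · -- (iii) monotone in n
    intro n hn x
    have hn' := hn0 n hn
    have hm' : (0:ℝ) < ((n:ℝ) + 1) := by linarith
    rw [hg' n hn x, hg' (n+1) (by omega) x]
    push_cast
    apply sub_le_sub
    · apply my_mono hφc hφ0 hφsupp
        (h₁ := fun s => Fp (x - 1/(n:ℝ) - s/(n:ℝ)))
        (h₂ := fun s => Fp (x - 1/((n:ℝ)+1) - s/((n:ℝ)+1)))
        (intp (x - 1/(n:ℝ)) (n:ℝ)) ?_ ?_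
      · have := intp (x - 1/((n:ℝ)+1)) ((n:ℝ)+1); exact this
      · intro s hs
        apply hFp
        have key : (1+s)/((n:ℝ)+1) ≤ (1+s)/(n:ℝ) :=
          div_le_div_of_nonneg_left (by linarith [hs.1]) hn' (by linarith)
        rw [add_div, add_div] at key
        linarith
    · apply my_mono hφc hφ0 hφsupp
        (h₁ := fun s => Fm (x + 1/((n:ℝ)+1) - s/((n:ℝ)+1)))
        (h₂ := fun s => Fm (x + 1/(n:ℝ) - s/(n:ℝ)))
        ?_ (intm (x + 1/(n:ℝ)) (n:ℝ)) ?_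
      · have := intm (x + 1/((n:ℝ)+1)) ((n:ℝ)+1); exact this
      · intro s hs
        apply hFm
        have key : (1-s)/((n:ℝ)+1) ≤ (1-s)/(n:ℝ) :=
          div_le_div_of_nonneg_left (by linarith [hs.2]) hn' (by linarith)
        rw [sub_div, sub_div] at key
        linarith
  · -- (iv) convergence
    intro x hcp hcm
    have hxlim : Tendsto (fun k : ℕ => x - 2/(k:ℝ)) atTop (nhds x) := by
      have h0 : Tendsto (fun k : ℕ => x - 2/(k:ℝ)) atTop (nhds (x - 0)) :=
        tendsto_const_nhds.sub (tendsto_const_div_atTop_nhds_zero_nat 2)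
      rwa [sub_zero] at h0
    have hxlim' : Tendsto (fun k : ℕ => x + 2/(k:ℝ)) atTop (nhds x) := by
      have h0 : Tendsto (fun k : ℕ => x + 2/(k:ℝ)) atTop (nhds (x + 0)) :=
        tendsto_const_nhds.add (tendsto_const_div_atTop_nhds_zero_nat 2)
      rwa [add_zero] at h0
    have hA : Tendsto (fun k : ℕ => ∫ s : ℝ, Fp (x - 1/(k:ℝ) - s/(k:ℝ)) * φ s)
        atTop (nhds (Fp x)) := by
      apply tendsto_of_tendsto_of_tendsto_of_le_of_le'
        (g := fun k : ℕ => Fp (x - 2/(k:ℝ))) (h := fun _ : ℕ => Fp x)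
      · exact hcp.tendsto.comp hxlim
      · exact tendsto_const_nhds
      · filter_upwards [eventually_ge_atTop 1] with k hk
        exact hlbp k hk x
      · filter_upwards [eventually_ge_atTop 1] with k hk
        exact hubp k hk x
    have hB : Tendsto (fun k : ℕ => ∫ s : ℝ, Fm (x + 1/(k:ℝ) - s/(k:ℝ)) * φ s)
        atTop (nhds (Fm x)) := by
      apply tendsto_of_tendsto_of_tendsto_of_le_of_le'
        (g := fun _ : ℕ => Fm x) (h := fun k : ℕ => Fm (x + 2/(k:ℝ)))
      · exact tendsto_const_nhds
      · exact hcm.tendsto.comp hxlim'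
      · filter_upwards [eventually_ge_atTop 1] with k hk
        exact hlbm k hk x
      · filter_upwards [eventually_ge_atTop 1] with k hk
        exact hubm k hk x
    have hAB : Tendsto (fun k : ℕ =>
        (∫ s : ℝ, Fp (x - 1/(k:ℝ) - s/(k:ℝ)) * φ s) -
        ∫ s : ℝ, Fm (x + 1/(k:ℝ) - s/(k:ℝ)) * φ s) atTop (nhds (f x)) := by
      rw [hf x]; exact hA.sub hB
    apply hAB.congr'
    filter_upwards [eventually_ge_atTop 1] with k hk
    exact (hg' k hk x).symm
  · -- (v) exactness
    intro n hn x hp hm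
    rw [hg' n hn x, hf x]
    have h1 : (∫ s : ℝ, Fp (x - 1/(n:ℝ) - s/(n:ℝ)) * φ s) = Fp x := by
      apply my_eval hφc hφsupp hφint
      filter_upwards with s hs
      apply hp
      obtain ⟨hl, hr⟩ := harg s hs n hn (x - 1/(n:ℝ))
      constructor <;> [skip; skip]
      · have : x - 1/(n:ℝ) - 1/(n:ℝ) = x - 2/(n:ℝ) := by ring
        linarith
      · have : x - 1/(n:ℝ) + 1/(n:ℝ) = x := by ring
        linarith
    have h2 : (∫ s : ℝ, Fm (x + 1/(n:ℝ) - s/(n:ℝ)) * φ s) = Fm x := by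
      apply my_eval hφc hφsupp hφint
      filter_upwards with s hs
      apply hm
      obtain ⟨hl, hr⟩ := harg s hs n hn (x + 1/(n:ℝ))
      constructor <;> [skip; skip]
      · have : x + 1/(n:ℝ) - 1/(n:ℝ) = x := by ring
        linarith
      · have : x + 1/(n:ℝ) + 1/(n:ℝ) = x + 2/(n:ℝ) := by ring
        linarith
    rw [h1, h2]
  · -- (vi)
    intro n hn a b hab
    have hn' := hn0 n hn
    constructor
    · intro hconst hab2
      -- Fm contribution is constantly Fm b on the interval
      have hBv : ∀ x ∈ Set.Icc a (b - 2/(n:ℝ)),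
          (∫ s : ℝ, Fm (x + 1/(n:ℝ) - s/(n:ℝ)) * φ s) = Fm b := by
        intro x hx
        apply my_eval hφc hφsupp hφint
        filter_upwards [ae_ne_real 1] with s hs1 hs
        apply hconst _ _ b ⟨hab, le_refl b⟩
        constructor
        · have hslt : s < 1 := lt_of_le_of_ne hs.2 hs1
          have hpos : 0 < (1 - s)/(n:ℝ) := div_pos (by linarith) hn'
          rw [sub_div] at hpos
          linarith [hx.1]
        · have h2 : 0 ≤ (1 + s)/(n:ℝ) := div_nonneg (by linarith [hs.1]) hn'.le
          rw [add_div] at h2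
          have he : (2:ℝ)/(n:ℝ) = 1/(n:ℝ) + 1/(n:ℝ) := by ring
          linarith [hx.2]
      intro x₁ hx₁ x₂ hx₂ h12
      rw [hg' n hn x₁, hg' n hn x₂, hBv x₁ hx₁, hBv x₂ hx₂]
      apply sub_le_sub_right
      apply my_mono hφc hφ0 hφsupp
        (h₁ := fun s => Fp (x₁ - 1/(n:ℝ) - s/(n:ℝ)))
        (h₂ := fun s => Fp (x₂ - 1/(n:ℝ) - s/(n:ℝ)))
        (intp (x₁ - 1/(n:ℝ)) (n:ℝ)) (intp (x₂ - 1/(n:ℝ)) (n:ℝ))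
      intro s _
      exact hFp (by linarith)
    · intro hconst hab2
      have hAv : ∀ x ∈ Set.Icc (a + 2/(n:ℝ)) b,
          (∫ s : ℝ, Fp (x - 1/(n:ℝ) - s/(n:ℝ)) * φ s) = Fp a := by
        intro x hx
        apply my_eval hφc hφsupp hφint
        filter_upwards [ae_ne_real (-1)] with s hs1 hs
        apply hconst _ _ a ⟨le_refl a, hab⟩
        constructor
        · have h2 : 0 ≤ (1 + s)/(n:ℝ) := div_nonneg (by linarith [hs.1]) hn'.le
          have h3 : (1 + s)/(n:ℝ) ≤ 2/(n:ℝ) := by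
            apply div_le_div_of_nonneg_right ?_ hn'.le
            linarith [hs.2]
          rw [add_div] at h3
          linarith [hx.1]
        · have hsgt : -1 < s := lt_of_le_of_ne hs.1 (Ne.symm hs1)
          have hpos : 0 < (1 + s)/(n:ℝ) := div_pos (by linarith) hn'
          rw [add_div] at hpos
          linarith [hx.2]
      intro x₁ hx₁ x₂ hx₂ h12
      rw [hg' n hn x₁, hg' n hn x₂, hAv x₁ hx₁, hAv x₂ hx₂]
      apply sub_le_sub_left
      apply my_mono hφc hφ0 hφsupp
        (h₁ := fun s => Fm (x₁ + 1/(n:ℝ) - s/(n:ℝ)))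
        (h₂ := fun s => Fm (x₂ + 1/(n:ℝ) - s/(n:ℝ)))
        (intm (x₁ + 1/(n:ℝ)) (n:ℝ)) (intm (x₂ + 1/(n:ℝ)) (n:ℝ))
      intro s _
      exact hFm (by linarith)
end

section
/- Let a < b be real numbers and let f : ℝ → ℝ have bounded variation on [a, b]. Then there exists g : ℝ → ℝ such that: (i) the set { x ∈ [a, b] : g(x) ≠ f(x) } is countable; (ii) Var(g; [a, b]) ≤ Var(f; [a, b]); and (iii) for every x ∈ (a, b), liminf_{z→x} g(z) ≤ g(x) ≤ limsup_{z→x} g(z), where the liminf and limsup are taken along the punctured neighborhood filter of x within [a, b]. -/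
open Filter Set Topology

/-- Every function of bounded variation on `[a, b]` admits a good representative,
differing from it on a countable set, with no larger variation, whose value at
each interior point lies between the liminf and the limsup of the function along
the punctured neighborhood filter within `[a, b]` (the standing assumption
(2.1)/(rd0) of the paper). -/
theorem exists_good_representative
    (a b : ℝ) (hab : a < b) (f : ℝ → ℝ)
    (hBV : eVariationOn f (Set.Icc a b) ≠ ⊤) :
    ∃ g : ℝ → ℝ,
      -- (i) g agrees with f off a countable set
      Set.Countable {x ∈ Set.Icc a b | g x ≠ f x} ∧
      -- (ii) g has no larger variation
      eVariationOn g (Set.Icc a b) ≤ eVariationOn f (Set.Icc a b) ∧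
      -- (iii) good-representative property at interior points
      (∀ x ∈ Set.Ioo a b,
        Filter.liminf g (nhdsWithin x (Set.Icc a b \ {x})) ≤ g x ∧
        g x ≤ Filter.limsup g (nhdsWithin x (Set.Icc a b \ {x}))) := by
  classical
  have hab' : a ≤ b := hab.le
  set π : ℝ → ℝ := fun x => max a (min x b) with hπdef
  have hπmono : Monotone π := fun x y h => max_le_max le_rfl (min_le_min h le_rfl)
  have hπmem : ∀ x, π x ∈ Icc a b := fun x =>
    ⟨le_max_left _ _, max_le hab' (min_le_right _ _)⟩
  have hπid : ∀ x ∈ Icc a b, π x = x := fun x hx => by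
    simp [hπdef, min_eq_left hx.2, max_eq_right hx.1]
  have hπb : ∀ x, b ≤ x → π x = b := fun x hx => by
    simp [hπdef, min_eq_right hx, max_eq_right hab']
  have hloc : LocallyBoundedVariationOn f (Icc a b) :=
    BoundedVariationOn.locallyBoundedVariationOn hBV
  obtain ⟨p, q, hp, hq, hfpq⟩ := hloc.exists_monotoneOn_sub_monotoneOn
  set P : ℝ → ℝ := fun x => p (π x) with hPdef
  set Q : ℝ → ℝ := fun x => q (π x) with hQdef
  have hP : Monotone P := fun x y h => hp (hπmem x) (hπmem y) (hπmono h)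
  have hQ : Monotone Q := fun x y h => hq (hπmem x) (hπmem y) (hπmono h)
  set F : ℝ → ℝ := fun x => f (π x) with hFdef
  have hFPQ : ∀ x, F x = P x - Q x := fun x => by
    simp only [hFdef, hPdef, hQdef, hfpq, Pi.sub_apply]
  have hFf : EqOn F f (Icc a b) := fun x hx => by
    simp only [hFdef, hπid x hx]
  set g : ℝ → ℝ := fun x => hP.stieltjesFunction x - hQ.stieltjesFunction x with hgdef
  refine ⟨g, ?_, ?_, ?_⟩
  · -- (i) countable disagreement set
    have hsub : {x ∈ Icc a b | g x ≠ f x} ⊆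
        {x | ¬ContinuousAt P x} ∪ {x | ¬ContinuousAt Q x} := by
      intro x hx
      by_contra h
      simp only [mem_union, mem_setOf_eq, not_or, not_not] at h
      obtain ⟨hPx, hQx⟩ := h
      apply hx.2
      have h1 : Function.rightLim P x = P x :=
        hP.continuousWithinAt_Ioi_iff_rightLim_eq.1 hPx.continuousWithinAt
      have h2 : Function.rightLim Q x = Q x :=
        hQ.continuousWithinAt_Ioi_iff_rightLim_eq.1 hQx.continuousWithinAt
      have : g x = P x - Q x := by
        simp only [hgdef, hP.stieltjesFunction_eq, hQ.stieltjesFunction_eq, h1, h2]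
      rw [this, ← hFPQ x, hFf hx.1]
    exact (hP.countable_not_continuousAt.union hQ.countable_not_continuousAt).mono hsub
  · -- (ii) variation does not increase
    have hVarF : eVariationOn F (Icc a b) = eVariationOn f (Icc a b) :=
      eVariationOn.eq_of_eqOn hFf
    have hshift : ∀ c : ℝ, 0 < c →
        eVariationOn (fun x => F (x + c)) (Icc a b) ≤ eVariationOn f (Icc a b) := by
      intro c hc
      have h1 : eVariationOn (F ∘ (· + c)) (Icc a b) ≤ eVariationOn F (Icc a (b + c)) :=
        eVariationOn.comp_le_of_monotoneOn F _
          (fun x _ y _ h => add_le_add_left h c)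
          (fun x hx => ⟨le_trans hx.1 (le_add_of_nonneg_right hc.le), add_le_add_left hx.2 c⟩)
      have h2 : eVariationOn F (Icc a b) + eVariationOn F (Icc b (b + c)) =
          eVariationOn F (Icc a (b + c)) := by
        have := eVariationOn.Icc_add_Icc F (s := univ) hab'
          (le_add_of_nonneg_right hc.le) (mem_univ b)
        simpa using this
      have h3 : eVariationOn F (Icc b (b + c)) = 0 := by
        apply eVariationOn.constant_on
        rintro _ ⟨x, hx, rfl⟩ _ ⟨y, hy, rfl⟩
        simp only [hFdef, hπb x hx.1, hπb y hy.1]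
      calc eVariationOn (fun x => F (x + c)) (Icc a b)
          ≤ eVariationOn F (Icc a (b + c)) := h1
        _ = eVariationOn F (Icc a b) + eVariationOn F (Icc b (b + c)) := h2.symm
        _ = eVariationOn f (Icc a b) := by rw [h3, add_zero, hVarF]
    have hptw : ∀ x : ℝ,
        Tendsto (fun n : ℕ => F (x + 1 / (n + 1))) atTop (𝓝 (g x)) := by
      intro x
      have hseq : Tendsto (fun n : ℕ => x + 1 / (n + 1)) atTop (𝓝[>] x) := by
        apply tendsto_nhdsWithin_of_tendsto_nhds_of_eventually_within
        · have h0 := tendsto_one_div_add_atTop_nhds_zero_nat (𝕜 := ℝ)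
          simpa using h0.const_add x
        · filter_upwards with n
          have : (0:ℝ) < 1 / (n + 1) := by positivity
          exact lt_add_of_pos_right x this
      have hPlim : Tendsto (fun n : ℕ => P (x + 1 / (n + 1))) atTop
          (𝓝 (hP.stieltjesFunction x)) := by
        rw [hP.stieltjesFunction_eq]
        exact (hP.tendsto_rightLim x).comp hseq
      have hQlim : Tendsto (fun n : ℕ => Q (x + 1 / (n + 1))) atTop
          (𝓝 (hQ.stieltjesFunction x)) := by
        rw [hQ.stieltjesFunction_eq]
        exact (hQ.tendsto_rightLim x).comp hseq
      have := hPlim.sub hQlim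
      simpa only [← hFPQ] using this
    by_contra h
    rw [not_le] at h
    obtain ⟨n, hn⟩ := (eVariationOn.lowerSemicontinuous_aux
      (F := fun (n : ℕ) (x : ℝ) => F (x + 1 / (n + 1))) (p := atTop)
      (fun x _ => hptw x) h).exists
    exact absurd hn (not_lt.2 (hshift _ (by positivity)))
  · -- (iii) good representative property
    intro x hx
    set l := nhdsWithin x (Icc a b \ {x}) with hldef
    have hsub : Ioo x b ⊆ Icc a b \ {x} := fun z hz =>
      ⟨⟨(hx.1.trans hz.1).le, hz.2.le⟩, ne_of_gt hz.1⟩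
    have hle : 𝓝[Ioo x b] x ≤ l := nhdsWithin_mono x hsub
    have hne : (𝓝[Ioo x b] x).NeBot := by
      rw [nhdsWithin_Ioo_eq_nhdsGT hx.2]
      infer_instance
    have hlne : l.NeBot := neBot_of_le hle
    have hg_t : Tendsto g (𝓝[Ioo x b] x) (𝓝 (g x)) := by
      have h1 : ContinuousWithinAt g (Ici x) x :=
        ((hP.stieltjesFunction).right_continuous x).sub
          ((hQ.stieltjesFunction).right_continuous x)
      exact h1.mono (fun z hz => hz.1.le)
    have hupper : ∀ᶠ z in l, g z ≤ hP.stieltjesFunction b - hQ.stieltjesFunction a := by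
      filter_upwards [eventually_mem_nhdsWithin] with z hz
      exact sub_le_sub ((hP.stieltjesFunction).mono hz.1.2)
        ((hQ.stieltjesFunction).mono hz.1.1)
    have hlower : ∀ᶠ z in l, hP.stieltjesFunction a - hQ.stieltjesFunction b ≤ g z := by
      filter_upwards [eventually_mem_nhdsWithin] with z hz
      exact sub_le_sub ((hP.stieltjesFunction).mono hz.1.1)
        ((hQ.stieltjesFunction).mono hz.1.2)
    have hbdd_le : IsBoundedUnder (· ≤ ·) l g :=
      ⟨hP.stieltjesFunction b - hQ.stieltjesFunction a, eventually_map.2 hupper⟩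
    have hbdd_ge : IsBoundedUnder (· ≥ ·) l g :=
      ⟨hP.stieltjesFunction a - hQ.stieltjesFunction b, eventually_map.2 hlower⟩
    have hbdd_le' : IsBoundedUnder (· ≤ ·) (𝓝[Ioo x b] x) g :=
      hbdd_le.mono hle
    have hbdd_ge' : IsBoundedUnder (· ≥ ·) (𝓝[Ioo x b] x) g :=
      hbdd_ge.mono hle
    constructor
    · have h1 : liminf g l ≤ liminf g (𝓝[Ioo x b] x) :=
        liminf_le_liminf_of_le hle hbdd_ge hbdd_le'.isCoboundedUnder_ge
      have h2 : liminf g (𝓝[Ioo x b] x) = g x := hg_t.liminf_eq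
      exact h1.trans_eq h2
    · have h1 : limsup g (𝓝[Ioo x b] x) ≤ limsup g l :=
        limsup_le_limsup_of_le hle hbdd_ge'.isCoboundedUnder_le hbdd_le
      have h2 : limsup g (𝓝[Ioo x b] x) = g x := hg_t.limsup_eq
      exact h2.symm.trans_le h1
end
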